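/- arXiv:2410.08076 — 2 statements merged into one kernel-verified Lean document; each statement's English description precedes it below -/
import Mathlib

section
/- Let Q be an O-directionally simple polytope such that the facial orientation O is the Hasse diagram of a lattice L = P(Q,O), and let γ_1, γ_2 be maximal chains of L. Suppose there exist x <_L x′ with x, x′ ∈ γ_1 ∩ γ_2 such that x is covered by distinct elements in γ_1 and γ_2. Then there exists a path γ_1 = δ_0, δ_1, …, δ_N = γ_2 in the move graph M(srce(Q), sink(Q), O), all of whose chains contain every vertex of γ_1 ∩ γ_2, together with an index k ≤ N such that δ_i agrees with γ_1 on the interval [x′, sink(Q)] for all i ≤ k and δ_k agrees with γ_2 on the interval [srce(Q), x′]. -/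
open Relation

/-- Points of `ℝ^d`. -/
abbrev Pt (d : ℕ) := Fin d → ℝ

/-- A polytope: the convex hull of a finite set. -/
def IsPolytope {d : ℕ} (Q : Set (Pt d)) : Prop :=
  ∃ S : Finset (Pt d), Q = convexHull ℝ (↑S : Set (Pt d))

/-- The segment from `x` to `y` is an edge (1-dimensional exposed face, i.e. an
exposed face which is a segment between distinct points) of `Q`. -/
def PEdge {d : ℕ} (Q : Set (Pt d)) (x y : Pt d) : Prop :=
  x ≠ y ∧ IsExposed ℝ Q (segment ℝ x y)

/-- `O` is an acyclic orientation of the 1-skeleton of `Q`: it relates exactly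
the endpoint pairs of edges, one direction per edge, with no directed cycles. -/
def IsOrientation {d : ℕ} (Q : Set (Pt d)) (O : Pt d → Pt d → Prop) : Prop :=
  (∀ x y, O x y → PEdge Q x y) ∧
  (∀ x y, PEdge Q x y → (O x y ∨ O y x)) ∧
  (∀ x y, O x y → ¬ O y x) ∧
  (∀ x, ¬ Relation.TransGen O x x)

/-- `x` is a source of the restriction of `O` to `F`: a vertex of `F` with no
incoming edge from `F`. -/
def IsSrcOf {d : ℕ} (O : Pt d → Pt d → Prop) (F : Set (Pt d)) (x : Pt d) : Prop :=
  x ∈ Set.extremePoints ℝ F ∧ ∀ y ∈ F, ¬ O y x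

/-- `x` is a sink of the restriction of `O` to `F`: a vertex of `F` with no
outgoing edge into `F`. -/
def IsSnkOf {d : ℕ} (O : Pt d → Pt d → Prop) (F : Set (Pt d)) (x : Pt d) : Prop :=
  x ∈ Set.extremePoints ℝ F ∧ ∀ y ∈ F, ¬ O x y

/-- `O` is a facial orientation of `Q`: an acyclic orientation of the 1-skeleton
whose restriction to each nonempty (exposed) face has a unique source and a
unique sink. -/
def IsFacial {d : ℕ} (Q : Set (Pt d)) (O : Pt d → Pt d → Prop) : Prop :=
  IsOrientation Q O ∧
  ∀ F : Set (Pt d), IsExposed ℝ Q F → F.Nonempty →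
    (∃! x, IsSrcOf O F x) ∧ (∃! x, IsSnkOf O F x)

/-- The dimension of a subset of `ℝ^d` (the dimension of its affine hull). -/
noncomputable def pdim {d : ℕ} (F : Set (Pt d)) : ℕ := Module.finrank ℝ ↥(vectorSpan ℝ F)

/-- `F` is the minimal (exposed) face of `Q` containing the point `x` and the
segments from `x` to each element of `E`. -/
def MinFaceCont {d : ℕ} (Q : Set (Pt d)) (x : Pt d) (E : Set (Pt d)) (F : Set (Pt d)) : Prop :=
  IsExposed ℝ Q F ∧ x ∈ F ∧ (∀ a ∈ E, segment ℝ x a ⊆ F) ∧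
    ∀ F', IsExposed ℝ Q F' → x ∈ F' → (∀ a ∈ E, segment ℝ x a ⊆ F') → F ⊆ F'

/-- `Q` is `O`-directionally simple: for each vertex `x` of `Q` and each set `E`
of heads of edges outgoing from `x`, the minimal face `F_E` containing `x` and
these edges exists and has dimension `|E|`, and distinct sets `E` span distinct
faces. -/
def DirSimple {d : ℕ} (Q : Set (Pt d)) (O : Pt d → Pt d → Prop) : Prop :=
  ∀ x ∈ Set.extremePoints ℝ Q, ∀ E : Finset (Pt d), (∀ a ∈ E, O x a) →
    (∃ F, MinFaceCont Q x ↑E F ∧ pdim F = E.card) ∧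
    (∀ E' : Finset (Pt d), (∀ a ∈ E', O x a) → ∀ F F',
      MinFaceCont Q x ↑E F → MinFaceCont Q x ↑E' F' → E ≠ E' → F ≠ F')

/-- `O` is the Hasse diagram (transitive reduction) of its reflexive-transitive
closure: every `O`-step is a cover relation of the 1-skeleton poset `P(Q,O)`. -/
def IsHasse {d : ℕ} (O : Pt d → Pt d → Prop) : Prop :=
  ∀ x y, O x y → ∀ z, Relation.ReflTransGen O x z → Relation.ReflTransGen O z y →
    z = x ∨ z = y

/-- The 1-skeleton poset `L = P(Q,O)` (the reflexive-transitive closure of `O`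
on the vertices of `Q`) is a lattice: any two vertices have a least upper bound
and a greatest lower bound. -/
def SkLattice {d : ℕ} (Q : Set (Pt d)) (O : Pt d → Pt d → Prop) : Prop :=
  ∀ x ∈ Set.extremePoints ℝ Q, ∀ y ∈ Set.extremePoints ℝ Q,
    (∃ j ∈ Set.extremePoints ℝ Q, Relation.ReflTransGen O x j ∧
      Relation.ReflTransGen O y j ∧
      ∀ z ∈ Set.extremePoints ℝ Q, Relation.ReflTransGen O x z →
        Relation.ReflTransGen O y z → Relation.ReflTransGen O j z) ∧
    (∃ m ∈ Set.extremePoints ℝ Q, Relation.ReflTransGen O m x ∧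
      Relation.ReflTransGen O m y ∧
      ∀ z ∈ Set.extremePoints ℝ Q, Relation.ReflTransGen O z x →
        Relation.ReflTransGen O z y → Relation.ReflTransGen O z m)

/-- The set of atoms of the interval `[u,v]` in the poset `P(Q,O)`: elements of
the interval covering `u`. -/
def atomSet {d : ℕ} (O : Pt d → Pt d → Prop) (u v : Pt d) : Set (Pt d) :=
  {x | Relation.ReflTransGen O u x ∧ x ≠ u ∧ Relation.ReflTransGen O x v ∧
    ∀ z, Relation.ReflTransGen O u z → Relation.ReflTransGen O z x → z = u ∨ z = x}

/-- A saturated chain from `u` to `v` in `P(Q,O)` (with `O` the Hasse diagram):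
a list of vertices starting at `u`, ending at `v`, with consecutive entries
related by `O`. -/
def SatChain {d : ℕ} (O : Pt d → Pt d → Prop) (u v : Pt d) (c : List (Pt d)) : Prop :=
  List.Chain' O c ∧ c.head? = some u ∧ c.getLast? = some v

/-- Two chains differ by a move across a 2-dimensional face `F` of `Q`: they
agree outside `F`, and within `F` they follow the two distinct directed paths
along the boundary of `F` from its source to its sink. -/
def MoveAdj {d : ℕ} (Q : Set (Pt d)) (O : Pt d → Pt d → Prop)
    (γ1 γ2 : List (Pt d)) : Prop :=
  ∃ F : Set (Pt d), IsExposed ℝ Q F ∧ pdim F = 2 ∧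
    ∃ p s m1 m2 : List (Pt d),
      γ1 = p ++ m1 ++ s ∧ γ2 = p ++ m2 ++ s ∧ m1 ≠ m2 ∧
      (∀ x ∈ m1, x ∈ F) ∧ (∀ x ∈ m2, x ∈ F) ∧
      (∃ a, m1.head? = some a ∧ m2.head? = some a ∧ IsSrcOf O F a) ∧
      (∃ b, m1.getLast? = some b ∧ m2.getLast? = some b ∧ IsSnkOf O F b)

/-! ### Auxiliary development -/

open Relation Set

section Aux

variable {d : ℕ} {Q : Set (Pt d)} {O : Pt d → Pt d → Prop}

/-- Abbreviation for the partial order of the 1-skeleton poset. -/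
local notation:50 x " ≼ " y => Relation.ReflTransGen O x y

namespace SkelAux

theorem o_irrefl (hfac : IsFacial Q O) (x : Pt d) : ¬ O x x :=
  fun h => hfac.1.2.2.2 x (Relation.TransGen.single h)

theorem o_asymm (hfac : IsFacial Q O) {x y : Pt d} (h : O x y) : ¬ O y x :=
  hfac.1.2.2.1 x y h

theorem no_cycle (hfac : IsFacial Q O) {x y : Pt d} (h : Relation.TransGen O x y)
    (h' : Relation.ReflTransGen O y x) : False := by
  exact hfac.1.2.2.2 x (Relation.TransGen.trans_left h h')

theorem rtg_antisymm (hfac : IsFacial Q O) {x y : Pt d}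
    (h : Relation.ReflTransGen O x y) (h' : Relation.ReflTransGen O y x) : x = y := by
  rcases (Relation.reflTransGen_iff_eq_or_transGen.1 h) with rfl | htg
  · rfl
  · exact (no_cycle hfac htg h').elim

theorem tg_of_o_rtg (hfac : IsFacial Q O) {x y z : Pt d} (h : O x y)
    (h' : Relation.ReflTransGen O y z) : Relation.TransGen O x z :=
  Relation.TransGen.trans_left (Relation.TransGen.single h) h'

theorem ne_of_tg (hfac : IsFacial Q O) {x y : Pt d} (h : Relation.TransGen O x y) : x ≠ y := by
  rintro rfl; exact hfac.1.2.2.2 x h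

/-- An extreme point of `Q` lying in a segment with endpoints in `Q` is an endpoint. -/
theorem extreme_mem_segment {z u w : Pt d} (hz : z ∈ Set.extremePoints ℝ Q)
    (hu : u ∈ Q) (hw : w ∈ Q) (hseg : z ∈ segment ℝ u w) : z = u ∨ z = w := by
  obtain ⟨a, b, ha, hb, hab, hz'⟩ := hseg
  rcases eq_or_lt_of_le ha with ha0 | ha0
  · right; rw [← ha0, zero_add] at hab; rw [← hz', ← ha0, hab]; simp
  rcases eq_or_lt_of_le hb with hb0 | hb0
  · left; rw [← hb0, add_zero] at hab; rw [← hz', ← hb0, hab]; simp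
  have := hz.2 hu hw ⟨a, b, ha0, hb0, hab, hz'⟩
  exact Or.inl this.symm

/-- Endpoints of an exposed segment (edge) are extreme points of `Q`. -/
theorem pedge_extreme (hQ : IsPolytope Q) {x y : Pt d} (h : PEdge Q x y) :
    x ∈ Set.extremePoints ℝ Q ∧ y ∈ Set.extremePoints ℝ Q := by
  obtain ⟨hne, hexp⟩ := h
  have hconv : Convex ℝ Q := by obtain ⟨S, rfl⟩ := hQ; exact convex_convexHull ℝ _
  have hsub : segment ℝ x y ⊆ Q := hexp.subset
  have hext : IsExtreme ℝ Q (segment ℝ x y) := hexp.isExtreme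
  -- prove x extreme
  have hxex : x ∈ Set.extremePoints ℝ Q := by
    refine mem_extremePoints.2 ⟨hsub (left_mem_segment ℝ x y), ?_⟩
    intro u hu w hw hopen
    have huw : u ∈ segment ℝ x y ∧ w ∈ segment ℝ x y :=
      ⟨hext.2 hu hw (left_mem_segment ℝ x y) hopen,
        hext.2 hw hu (left_mem_segment ℝ x y) (by rw [openSegment_symm]; exact hopen)⟩
    obtain ⟨a1, b1, ha1, hb1, hab1, hu'⟩ := huw.1
    obtain ⟨a2, b2, ha2, hb2, hab2, hw'⟩ := huw.2
    obtain ⟨c, e, hc, he, hce, hx'⟩ := hopen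
    -- x = (c*a1 + e*a2) • x + (c*b1 + e*b2) • y
    have hxeq : (c * a1 + e * a2) • x + (c * b1 + e * b2) • y = x := by
      have h2 : (c * a1 + e * a2) • x + (c * b1 + e * b2) • y
          = c • (a1 • x + b1 • y) + e • (a2 • x + b2 • y) := by module
      rw [h2, hu', hw', hx']
    have hco : (c * a1 + e * a2) + (c * b1 + e * b2) = 1 := by
      have h1 : (c * a1 + e * a2) + (c * b1 + e * b2) = c * (a1 + b1) + e * (a2 + b2) := by ring
      rw [hab1, hab2] at h1
      rw [h1]; rw [mul_one, mul_one]; exact hce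
    have hbeta : (c * b1 + e * b2) • (y - x) = 0 := by
      have h1 : (c * a1 + e * a2) = 1 - (c * b1 + e * b2) := by linarith
      rw [smul_sub]
      have := hxeq
      rw [h1] at this
      have : ((1 : ℝ) - (c * b1 + e * b2)) • x + (c * b1 + e * b2) • y - x = 0 := by
        rw [this]; simp
      calc (c * b1 + e * b2) • y - (c * b1 + e * b2) • x
          = ((1 : ℝ) - (c * b1 + e * b2)) • x + (c * b1 + e * b2) • y - x := by module
        _ = 0 := this
    have hb0 : c * b1 + e * b2 = 0 := by
      by_contra hne0
      exact hne (by
        have := smul_eq_zero.1 hbeta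
        rcases this with h | h
        · exact absurd h hne0
        · exact (sub_eq_zero.1 h).symm ▸ rfl)
    have hb1' : b1 = 0 := by nlinarith [mul_nonneg hc.le hb1, mul_nonneg he.le hb2]
    have hb2' : b2 = 0 := by nlinarith [mul_nonneg hc.le hb1, mul_nonneg he.le hb2]
    constructor
    · rw [← hu']; rw [hb1'] at hab1 ⊢; simp at hab1; rw [hab1]; simp
    · rw [← hw']; rw [hb2'] at hab2 ⊢; simp at hab2; rw [hab2]; simp
  have hyex : y ∈ Set.extremePoints ℝ Q := by
    have h' : PEdge Q y x := ⟨hne.symm, by rwa [segment_symm]⟩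
    -- reuse by symmetry: same proof with roles swapped
    obtain ⟨hne', hexp'⟩ := h'
    have hsub' : segment ℝ y x ⊆ Q := hexp'.subset
    have hext' : IsExtreme ℝ Q (segment ℝ y x) := hexp'.isExtreme
    refine mem_extremePoints.2 ⟨hsub' (left_mem_segment ℝ y x), ?_⟩
    intro u hu w hw hopen
    have huw : u ∈ segment ℝ y x ∧ w ∈ segment ℝ y x :=
      ⟨hext'.2 hu hw (left_mem_segment ℝ y x) hopen,
        hext'.2 hw hu (left_mem_segment ℝ y x) (by rw [openSegment_symm]; exact hopen)⟩
    obtain ⟨a1, b1, ha1, hb1, hab1, hu'⟩ := huw.1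
    obtain ⟨a2, b2, ha2, hb2, hab2, hw'⟩ := huw.2
    obtain ⟨c, e, hc, he, hce, hx'⟩ := hopen
    have hxeq : (c * a1 + e * a2) • y + (c * b1 + e * b2) • x = y := by
      have h2 : (c * a1 + e * a2) • y + (c * b1 + e * b2) • x
          = c • (a1 • y + b1 • x) + e • (a2 • y + b2 • x) := by module
      rw [h2, hu', hw', hx']
    have hco : (c * a1 + e * a2) + (c * b1 + e * b2) = 1 := by
      have h1 : (c * a1 + e * a2) + (c * b1 + e * b2) = c * (a1 + b1) + e * (a2 + b2) := by ring
      rw [hab1, hab2] at h1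
      rw [h1]; rw [mul_one, mul_one]; exact hce
    have hbeta : (c * b1 + e * b2) • (x - y) = 0 := by
      have h1 : (c * a1 + e * a2) = 1 - (c * b1 + e * b2) := by linarith
      rw [h1] at hxeq
      calc (c * b1 + e * b2) • (x - y)
          = ((1 : ℝ) - (c * b1 + e * b2)) • y + (c * b1 + e * b2) • x - y := by module
        _ = 0 := by rw [hxeq]; simp
    have hb0 : c * b1 + e * b2 = 0 := by
      by_contra hne0
      rcases smul_eq_zero.1 hbeta with h | h
      · exact hne0 h
      · exact hne' (by rw [sub_eq_zero] at h; exact h.symm ▸ rfl)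
    have hb1' : b1 = 0 := by nlinarith [mul_nonneg hc.le hb1, mul_nonneg he.le hb2]
    have hb2' : b2 = 0 := by nlinarith [mul_nonneg hc.le hb1, mul_nonneg he.le hb2]
    constructor
    · rw [← hu']; rw [hb1'] at hab1 ⊢; simp at hab1; rw [hab1]; simp
    · rw [← hw']; rw [hb2'] at hab2 ⊢; simp at hab2; rw [hab2]; simp
  exact ⟨hxex, hyex⟩

theorem edge_vertices (hQ : IsPolytope Q) (hfac : IsFacial Q O) {x y : Pt d} (h : O x y) :
    x ∈ Set.extremePoints ℝ Q ∧ y ∈ Set.extremePoints ℝ Q :=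
  pedge_extreme hQ (hfac.1.1 x y h)

theorem rtg_extreme (hQ : IsPolytope Q) (hfac : IsFacial Q O) {x y : Pt d}
    (h : Relation.ReflTransGen O x y) (hx : x ∈ Set.extremePoints ℝ Q) :
    y ∈ Set.extremePoints ℝ Q := by
  induction h with
  | refl => exact hx
  | tail _ hstep ih => exact (edge_vertices hQ hfac hstep).2

theorem vertices_finite (hQ : IsPolytope Q) : (Set.extremePoints ℝ Q).Finite := by
  obtain ⟨S, rfl⟩ := hQ
  exact S.finite_toSet.subset extremePoints_convexHull_subset

/-- Three distinct extreme points cannot be collinear. -/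
theorem not_collinear_extreme {u v w : Pt d} (hu : u ∈ Set.extremePoints ℝ Q)
    (hv : v ∈ Set.extremePoints ℝ Q) (hw : w ∈ Set.extremePoints ℝ Q)
    (huv : u ≠ v) (huw : u ≠ w) (hvw : v ≠ w) {c : ℝ} (hc : w - u = c • (v - u)) : False := by
  have hvQ : v ∈ Q := hv.1
  have hwQ : w ∈ Q := hw.1
  have huQ : u ∈ Q := hu.1
  rcases lt_trichotomy c 0 with hc0 | hc0 | hc0
  · -- u ∈ openSegment v w
    have h1c : (0:ℝ) < 1 - c := by linarith
    have hs : (0:ℝ) < 1 / (1 - c) := div_pos one_pos h1c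
    set s : ℝ := 1 / (1 - c) with hs_def
    have hsc : s * (1 - c) = 1 := by
      rw [hs_def]; field_simp
    have hs1 : s < 1 := by
      rw [hs_def, div_lt_one h1c]; linarith
    have hkey : (1 - s) • v + s • w = u := by
      have hw' : w = u + c • (v - u) := by rw [← hc]; module
      rw [hw']
      have h2 : (1 - s) • v + s • (u + c • (v - u)) =
          (s * (1 - c)) • u + (1 - s + s * c) • v := by module
      rw [h2, hsc]
      have h3 : (1 : ℝ) - s + s * c = 0 := by nlinarith
      rw [h3]; simp
    have := hu.2 hvQ hwQ ⟨1 - s, s, by linarith, hs, by ring, hkey⟩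
    exact huv this.symm
  · rw [hc0, zero_smul, sub_eq_zero] at hc; exact huw hc.symm
  · rcases lt_trichotomy c 1 with hc1 | hc1 | hc1
    · -- w ∈ openSegment u v
      have hkey : (1 - c) • u + c • v = w := by
        have hw' : w = u + c • (v - u) := by rw [← hc]; module
        rw [hw']; module
      have := hw.2 huQ hvQ ⟨1 - c, c, by linarith, hc0, by ring, hkey⟩
      exact huw this
    · rw [hc1, one_smul, sub_left_inj] at hc; exact hvw hc.symm
    · -- v ∈ openSegment u w
      have hcpos : (0:ℝ) < c := by linarith
      have hcinv : (0:ℝ) < 1 / c := div_pos one_pos hcpos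
      have hcinv1 : 1 / c < 1 := by rw [div_lt_one hcpos]; linarith
      have hcc : 1 / c * c = 1 := by field_simp
      have hkey : (1 - 1/c) • u + (1/c) • w = v := by
        have hw' : w = u + c • (v - u) := by rw [← hc]; module
        rw [hw']
        have h2 : (1 - 1/c) • u + (1/c) • (u + c • (v - u)) =
            (1/c * c) • v + (1 - 1/c * c) • u := by module
        rw [h2, hcc]; simp
      have := hv.2 huQ hwQ ⟨1 - 1/c, 1/c, by linarith, hcinv, by ring, hkey⟩
      exact huv this
end SkelAux
end Aux

section Aux2
variable {d : ℕ} {Q : Set (Pt d)} {O : Pt d → Pt d → Prop}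
open Relation Set
namespace SkelAux

theorem pdim_mono {F G : Set (Pt d)} (h : F ⊆ G) : pdim F ≤ pdim G := by
  unfold pdim
  exact Submodule.finrank_mono (vectorSpan_mono ℝ h)

theorem exposed_functional {F : Set (Pt d)} (hF : IsExposed ℝ Q F) (hne : F.Nonempty) :
    ∃ l : (Pt d) →L[ℝ] ℝ, F = {x ∈ Q | ∀ y ∈ Q, l y ≤ l x} := hF hne

/-- Nested exposed faces with equal dimension are equal. -/
theorem face_eq_of_rank_le {F G : Set (Pt d)} (hF : IsExposed ℝ Q F) (hG : IsExposed ℝ Q G)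
    (hFG : F ⊆ G) (hne : F.Nonempty) (hrank : pdim G ≤ pdim F) : F = G := by
  obtain ⟨l, hl⟩ := exposed_functional hF hne
  obtain ⟨p, hp⟩ := hne
  have hWle : vectorSpan ℝ F ≤ vectorSpan ℝ G := vectorSpan_mono ℝ hFG
  have hW : vectorSpan ℝ F = vectorSpan ℝ G :=
    Submodule.eq_of_le_of_finrank_le hWle hrank
  have hpQ : p ∈ Q ∧ ∀ y ∈ Q, l y ≤ l p := by rw [hl] at hp; exact hp
  have hker : ∀ z, z ∈ vectorSpan ℝ F → l z = 0 := by
    have hsub : vectorSpan ℝ F ≤ LinearMap.ker (l : (Pt d) →L[ℝ] ℝ).toLinearMap := by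
      rw [vectorSpan_def]
      apply Submodule.span_le.2
      rintro z ⟨z1, hz1, z2, hz2, rfl⟩
      have h1 : z1 ∈ Q ∧ ∀ y ∈ Q, l y ≤ l z1 := by rw [hl] at hz1; exact hz1
      have h2 : z2 ∈ Q ∧ ∀ y ∈ Q, l y ≤ l z2 := by rw [hl] at hz2; exact hz2
      have heq : l z1 = l z2 := le_antisymm (h2.2 z1 h1.1) (h1.2 z2 h2.1)
      simp only [SetLike.mem_coe, LinearMap.mem_ker]
      show l (z1 - z2) = 0
      rw [map_sub, heq, sub_self]
    intro z hz
    exact hsub hz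
  apply Set.Subset.antisymm hFG
  intro g hg
  have hgP : g - p ∈ vectorSpan ℝ G := vsub_mem_vectorSpan ℝ hg (hFG hp)
  rw [← hW] at hgP
  have hlg : l g = l p := by
    have := hker _ hgP
    have h2 : l (g - p) = l g - l p := map_sub l g p
    rw [h2] at this; linarith
  rw [hl]
  refine ⟨hG.subset hg, ?_⟩
  intro y hy
  rw [hlg]
  exact hpQ.2 y hy

/-- Two independent difference vectors inside `F` force `2 ≤ pdim F`. -/
theorem two_le_pdim {F : Set (Pt d)} {p y z : Pt d} (hp : p ∈ F) (hy : y ∈ F) (hz : z ∈ F)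
    (hind : LinearIndependent ℝ ![y - p, z - p]) : 2 ≤ pdim F := by
  have h1 : y - p ∈ vectorSpan ℝ F := vsub_mem_vectorSpan ℝ hy hp
  have h2 : z - p ∈ vectorSpan ℝ F := vsub_mem_vectorSpan ℝ hz hp
  have hle : Submodule.span ℝ (Set.range ![y - p, z - p]) ≤ vectorSpan ℝ F := by
    apply Submodule.span_le.2
    rintro w ⟨i, rfl⟩
    fin_cases i
    · exact h1
    · exact h2
  have hcard : Module.finrank ℝ ↥(Submodule.span ℝ (Set.range ![y - p, z - p])) = 2 := by
    rw [finrank_span_eq_card hind]; simp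
  calc (2:ℕ) = Module.finrank ℝ ↥(Submodule.span ℝ (Set.range ![y - p, z - p])) := hcard.symm
    _ ≤ pdim F := Submodule.finrank_mono hle

/-- If the pair is dependent, extract a collinearity. -/
theorem dep_collinear {u v : Pt d} (hu : u ≠ 0) (hdep : ¬ LinearIndependent ℝ ![u, v]) :
    ∃ c : ℝ, v = c • u := by
  rw [LinearIndependent.pair_iff] at hdep
  push_neg at hdep
  obtain ⟨s, t, hst, hne⟩ := hdep
  by_cases ht : t = 0
  · subst ht
    simp only [zero_smul, add_zero] at hst
    exfalso
    rcases smul_eq_zero.1 hst with h | h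
    · exact absurd rfl (hne h)
    · exact hu h
  · refine ⟨-(s / t), ?_⟩
    have hvt : t • v = -(s • u) := by
      have h := hst
      rw [add_comm, add_eq_zero_iff_eq_neg] at h
      exact h
    have hv : v = t⁻¹ • (t • v) := by rw [← mul_smul, inv_mul_cancel₀ ht, one_smul]
    rw [hv, hvt, smul_neg, ← mul_smul, ← neg_smul]
    congr 1
    field_simp

/-- A vertex of a 2-dimensional face cannot have three distinct edge-neighbours
within the face. -/
theorem no3 (hQ : IsPolytope Q) {F : Set (Pt d)} (hF : IsExposed ℝ Q F) (hdim : pdim F ≤ 2)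
    {v y1 y2 y3 : Pt d} (hvF : v ∈ F) (h1F : y1 ∈ F) (h2F : y2 ∈ F) (h3F : y3 ∈ F)
    (e1 : PEdge Q v y1) (e2 : PEdge Q v y2) (e3 : PEdge Q v y3)
    (h12 : y1 ≠ y2) (h13 : y1 ≠ y3) (h23 : y2 ≠ y3) : False := by
  have hvE : v ∈ Set.extremePoints ℝ Q := (pedge_extreme hQ e1).1
  have h1E : y1 ∈ Set.extremePoints ℝ Q := (pedge_extreme hQ e1).2
  have h2E : y2 ∈ Set.extremePoints ℝ Q := (pedge_extreme hQ e2).2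
  have h3E : y3 ∈ Set.extremePoints ℝ Q := (pedge_extreme hQ e3).2
  have h1Q : y1 ∈ Q := e1.2.subset (right_mem_segment ℝ v y1)
  have h2Q : y2 ∈ Q := e2.2.subset (right_mem_segment ℝ v y2)
  have h3Q : y3 ∈ Q := e3.2.subset (right_mem_segment ℝ v y3)
  have hvQ : v ∈ Q := e1.2.subset (left_mem_segment ℝ v y1)
  set u1 := y1 - v with hu1
  set u2 := y2 - v with hu2
  set u3 := y3 - v with hu3
  -- u1 u2 independent
  have hind : LinearIndependent ℝ ![u1, u2] := by
    by_contra hdep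
    have hu1ne : u1 ≠ 0 := sub_ne_zero.2 (fun h => e1.1 h.symm)
    obtain ⟨c, hc⟩ := dep_collinear hu1ne hdep
    exact not_collinear_extreme hvE h1E h2E (fun h => e1.1 h) (fun h => e2.1 h) h12 hc
  -- span equality
  have hspan : Submodule.span ℝ (Set.range ![u1, u2]) = vectorSpan ℝ F := by
    apply Submodule.eq_of_le_of_finrank_le
    · apply Submodule.span_le.2
      rintro w ⟨i, rfl⟩
      fin_cases i
      · exact vsub_mem_vectorSpan ℝ h1F hvF
      · exact vsub_mem_vectorSpan ℝ h2F hvF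
    · have : Module.finrank ℝ ↥(Submodule.span ℝ (Set.range ![u1, u2])) = 2 := by
        rw [finrank_span_eq_card hind]; simp
      rw [this]; exact hdim
  have hu3mem : u3 ∈ Submodule.span ℝ (Set.range ![u1, u2]) := by
    rw [hspan]; exact vsub_mem_vectorSpan ℝ h3F hvF
  have hrange : Set.range ![u1, u2] = {u1, u2} := by
    ext w; simp [Matrix.range_cons, Matrix.range_empty]; tauto
  rw [hrange, Submodule.mem_span_pair] at hu3mem
  obtain ⟨a, b, hab⟩ := hu3mem
  -- the three exposing functionals
  obtain ⟨l1, hl1⟩ := exposed_functional e1.2 ⟨v, left_mem_segment ℝ v y1⟩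
  obtain ⟨l2, hl2⟩ := exposed_functional e2.2 ⟨v, left_mem_segment ℝ v y2⟩
  obtain ⟨l3, hl3⟩ := exposed_functional e3.2 ⟨v, left_mem_segment ℝ v y3⟩
  have key : ∀ (l : (Pt d) →L[ℝ] ℝ) (yi : Pt d), PEdge Q v yi →
      segment ℝ v yi = {x ∈ Q | ∀ y ∈ Q, l y ≤ l x} →
      l yi = l v ∧ ∀ yj, yj ∈ Set.extremePoints ℝ Q → yj ∈ Q → yj ≠ v → yj ≠ yi →
        l yj < l v := by
    intro l yi ei hli
    have hvmax : ∀ y ∈ Q, l y ≤ l v := by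
      have : v ∈ segment ℝ v yi := left_mem_segment ℝ v yi
      rw [hli] at this; exact this.2
    have hyimax : ∀ y ∈ Q, l y ≤ l yi := by
      have : yi ∈ segment ℝ v yi := right_mem_segment ℝ v yi
      rw [hli] at this; exact this.2
    have hyiQ : yi ∈ Q := ei.2.subset (right_mem_segment ℝ v yi)
    constructor
    · exact le_antisymm (hvmax yi hyiQ) (hyimax v hvQ)
    · intro yj hjE hjQ hjv hjyi
      rcases lt_or_eq_of_le (hvmax yj hjQ) with h | h
      · exact h
      · exfalso
        have : yj ∈ segment ℝ v yi := by
          rw [hli]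
          exact ⟨hjQ, fun y hy => le_trans (hvmax y hy) (le_of_eq h.symm)⟩
        rcases extreme_mem_segment hjE hvQ hyiQ this with h' | h'
        · exact hjv h'
        · exact hjyi h'
  obtain ⟨hl1e, hl1s⟩ := key l1 y1 e1 hl1
  obtain ⟨hl2e, hl2s⟩ := key l2 y2 e2 hl2
  obtain ⟨hl3e, hl3s⟩ := key l3 y3 e3 hl3
  have s12 : l1 y2 < l1 v := hl1s y2 h2E h2Q (fun h => e2.1 h.symm) h12.symm
  have s13 : l1 y3 < l1 v := hl1s y3 h3E h3Q (fun h => e3.1 h.symm) h13.symm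
  have s21 : l2 y1 < l2 v := hl2s y1 h1E h1Q (fun h => e1.1 h.symm) h12
  have s23 : l2 y3 < l2 v := hl2s y3 h3E h3Q (fun h => e3.1 h.symm) h23.symm
  have s31 : l3 y1 < l3 v := hl3s y1 h1E h1Q (fun h => e1.1 h.symm) h13
  have s32 : l3 y2 < l3 v := hl3s y2 h2E h2Q (fun h => e2.1 h.symm) h23
  -- evaluate functionals on the relation u3 = a u1 + b u2
  have ev : ∀ l : (Pt d) →L[ℝ] ℝ, l u3 = a * l u1 + b * l u2 := by
    intro l
    rw [← hab]
    simp [map_add, map_smul]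
  have e1u : l1 u1 = 0 := by rw [hu1, map_sub, hl1e, sub_self]
  have e2u : l2 u2 = 0 := by rw [hu2, map_sub, hl2e, sub_self]
  have e3u : l3 u3 = 0 := by rw [hu3, map_sub, hl3e, sub_self]
  have l1u2 : l1 u2 < 0 := by rw [hu2, map_sub]; linarith
  have l1u3 : l1 u3 < 0 := by rw [hu3, map_sub]; linarith
  have l2u1 : l2 u1 < 0 := by rw [hu1, map_sub]; linarith
  have l2u3 : l2 u3 < 0 := by rw [hu2] at *; rw [hu3, map_sub]; linarith
  have l3u1 : l3 u1 < 0 := by rw [hu1, map_sub]; linarith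
  have l3u2 : l3 u2 < 0 := by rw [hu2, map_sub]; linarith
  have hb : 0 < b := by
    have := ev l1
    rw [e1u] at this
    nlinarith
  have ha : 0 < a := by
    have := ev l2
    rw [e2u] at this
    nlinarith
  have := ev l3
  rw [e3u] at this
  nlinarith

theorem pedge_symm {x y : Pt d} (h : PEdge Q x y) : PEdge Q y x :=
  ⟨h.1.symm, by rw [segment_symm]; exact h.2⟩

/-! ### Saturated chain helpers -/

theorem satchain_ne_nil {u v : Pt d} {c : List (Pt d)} (h : SatChain O u v c) : c ≠ [] := by
  intro h'; subst h'; simp [SatChain] at h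

theorem satchain_single (v : Pt d) : SatChain O v v [v] := by
  refine ⟨List.isChain_singleton v, rfl, rfl⟩

theorem satchain_cons_elim {u v : Pt d} {c : List (Pt d)} (h : SatChain O u v c) :
    ∃ t, c = u :: t := by
  obtain ⟨_, hh, _⟩ := h
  cases c with
  | nil => simp at hh
  | cons x t => simp at hh; exact ⟨t, by rw [hh]⟩

theorem satchain_cons {u w v : Pt d} {c : List (Pt d)} (h : O u w) (hc : SatChain O w v c) :
    SatChain O u v (u :: c) := by
  obtain ⟨t, rfl⟩ := satchain_cons_elim hc
  obtain ⟨hch, hh, hl⟩ := hc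
  exact ⟨List.isChain_cons_cons.2 ⟨h, hch⟩, rfl, by rwa [List.getLast?_cons_cons]⟩

theorem satchain_cons_inv {u w v : Pt d} {t : List (Pt d)}
    (h : SatChain O u v (u :: w :: t)) : O u w ∧ SatChain O w v (w :: t) := by
  obtain ⟨hch, hh, hl⟩ := h
  rw [List.Chain', List.isChain_cons_cons] at hch
  exact ⟨hch.1, ⟨hch.2, rfl, by rwa [List.getLast?_cons_cons] at hl⟩⟩

theorem satchain_rtg {u v : Pt d} {c : List (Pt d)} (h : SatChain O u v c) :
    Relation.ReflTransGen O u v := by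
  induction c generalizing u with
  | nil => exact absurd rfl (satchain_ne_nil h)
  | cons x t ih =>
    obtain ⟨t', ht'⟩ := satchain_cons_elim h
    simp at ht'
    obtain ⟨rfl, rfl⟩ := ht'
    cases t with
    | nil =>
      obtain ⟨_, _, hl⟩ := h
      simp at hl; rw [hl]
    | cons w t2 =>
      obtain ⟨h1, h2⟩ := satchain_cons_inv h
      exact Relation.ReflTransGen.head h1 (ih h2)

theorem satchain_last_mem {u v : Pt d} {c : List (Pt d)} (h : SatChain O u v c) : v ∈ c := by
  exact List.mem_of_mem_getLast? (by rw [h.2.2]; rfl)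

theorem satchain_head_mem {u v : Pt d} {c : List (Pt d)} (h : SatChain O u v c) : u ∈ c := by
  obtain ⟨t, rfl⟩ := satchain_cons_elim h
  simp

theorem satchain_mem_between {u v z : Pt d} {c : List (Pt d)} (h : SatChain O u v c)
    (hz : z ∈ c) : Relation.ReflTransGen O u z ∧ Relation.ReflTransGen O z v := by
  induction c generalizing u with
  | nil => simp at hz
  | cons x t ih =>
    obtain ⟨t', ht'⟩ := satchain_cons_elim h
    simp at ht'
    obtain ⟨rfl, rfl⟩ := ht'
    rcases List.mem_cons.1 hz with rfl | hz'
    · exact ⟨Relation.ReflTransGen.refl, satchain_rtg h⟩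
    · cases t with
      | nil => simp at hz'
      | cons w t2 =>
        obtain ⟨h1, h2⟩ := satchain_cons_inv h
        obtain ⟨ih1, ih2⟩ := ih h2 hz'
        exact ⟨Relation.ReflTransGen.head h1 ih1, ih2⟩

theorem satchain_append {u w v : Pt d} {c1 c2 : List (Pt d)}
    (h1 : SatChain O u w c1) (h2 : SatChain O w v c2) :
    SatChain O u v (c1 ++ c2.tail) := by
  obtain ⟨t, rfl⟩ := satchain_cons_elim h2
  simp only [List.tail_cons]
  cases t with
  | nil =>
    obtain ⟨_, _, hl⟩ := h2
    simp at hl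
    subst hl
    simpa using h1
  | cons w2 t2 =>
    obtain ⟨ho, hrest⟩ := satchain_cons_inv h2
    refine ⟨?_, ?_, ?_⟩
    · rw [List.Chain', List.isChain_append]
      refine ⟨h1.1, hrest.1, ?_⟩
      intro x hx y hy
      rw [h1.2.2] at hx
      simp only [Option.mem_def, Option.some.injEq, List.head?_cons] at hx hy
      rw [← hx, ← hy]
      exact ho
    · rw [List.head?_append, h1.2.1]; rfl
    · rw [List.getLast?_append, hrest.2.2]; rfl

theorem satchain_self (hfac : IsFacial Q O) {v : Pt d} {c : List (Pt d)}
    (h : SatChain O v v c) : c = [v] := by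
  obtain ⟨t, rfl⟩ := satchain_cons_elim h
  cases t with
  | nil => rfl
  | cons w t2 =>
    obtain ⟨ho, hrest⟩ := satchain_cons_inv h
    exact (no_cycle hfac (Relation.TransGen.single ho) (satchain_rtg hrest)).elim

theorem satchain_split {u v z : Pt d} {c1 c2 : List (Pt d)}
    (h : SatChain O u v (c1 ++ z :: c2)) :
    SatChain O u z (c1 ++ [z]) ∧ SatChain O z v (z :: c2) := by
  obtain ⟨hch, hh, hl⟩ := h
  have hch1 : List.Chain' O (c1 ++ [z]) := by
    have : c1 ++ z :: c2 = (c1 ++ [z]) ++ c2 := by simp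
    rw [this] at hch
    exact (List.isChain_append.1 hch).1
  have hch2 : List.Chain' O (z :: c2) := (List.isChain_append.1 hch).2.1
  refine ⟨⟨hch1, ?_, ?_⟩, ⟨hch2, rfl, ?_⟩⟩
  · cases c1 with
    | nil => simp at hh ⊢; simp [hh]
    | cons x t => simp at hh ⊢; exact hh
  · rw [List.getLast?_append]; rfl
  · rw [List.getLast?_append] at hl
    cases c2 with
    | nil => simp at hl ⊢; exact hl
    | cons w t2 => simpa using hl

theorem satchain_strict_between {u v z : Pt d} {c1 c2 : List (Pt d)}
    (h : SatChain O u v (c1 ++ z :: c2)) (hne : c2 ≠ []) : Relation.TransGen O z v := by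
  obtain ⟨hsp1, hsp2⟩ := satchain_split h
  cases c2 with
  | nil => exact absurd rfl hne
  | cons w t2 =>
    obtain ⟨ho, hrest⟩ := satchain_cons_inv hsp2
    exact Relation.TransGen.head' ho (satchain_rtg hrest)

theorem satchain_comparable {u v z z' : Pt d} {c : List (Pt d)} (h : SatChain O u v c)
    (hz : z ∈ c) (hz' : z' ∈ c) :
    Relation.ReflTransGen O z z' ∨ Relation.ReflTransGen O z' z := by
  obtain ⟨X, Y, rfl⟩ := List.append_of_mem hz
  obtain ⟨hs1, hs2⟩ := satchain_split h
  rcases List.mem_append.1 hz' with hX | hcons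
  · right
    exact (satchain_mem_between hs1 (List.mem_append_left [z] hX)).2
  · rcases List.mem_cons.1 hcons with rfl | hY
    · left; exact Relation.ReflTransGen.refl
    · left; exact (satchain_mem_between hs2 (List.mem_cons_of_mem z hY)).1

/-! ### Faces, sinks, walks -/

theorem ep_face {F : Set (Pt d)} {v : Pt d} (hv : v ∈ Set.extremePoints ℝ Q) (hvF : v ∈ F)
    (hFQ : F ⊆ Q) : v ∈ Set.extremePoints ℝ F :=
  mem_extremePoints.2 ⟨hvF, fun x1 h1 x2 h2 ho => ⟨hv.2 (hFQ h1) (hFQ h2) ho,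
    hv.2 (hFQ h2) (hFQ h1) (by rw [openSegment_symm]; exact ho)⟩⟩

theorem ep_face_sub {F : Set (Pt d)} (hF : IsExposed ℝ Q F) :
    Set.extremePoints ℝ F ⊆ Set.extremePoints ℝ Q :=
  hF.isExtreme.extremePoints_subset_extremePoints

/-- Any vertex of a face other than its sink has an outgoing edge within the face. -/
theorem out_of_ne_snk (hfac : IsFacial Q O) {F : Set (Pt d)} (hF : IsExposed ℝ Q F)
    {t v : Pt d} (ht : IsSnkOf O F t) (hv : v ∈ Set.extremePoints ℝ Q) (hvF : v ∈ F)
    (hvt : v ≠ t) : ∃ w, O v w ∧ w ∈ F := by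
  by_contra hcon
  push_neg at hcon
  have hsnk : IsSnkOf O F v :=
    ⟨ep_face hv hvF hF.subset, fun y hy hOy => hcon y hOy hy⟩
  obtain ⟨t', ht', hun⟩ := (hfac.2 F hF ⟨v, hvF⟩).2
  exact hvt ((hun v hsnk).trans (hun t ht).symm)

/-- Measure for well-founded recursion: number of vertices above `v`. -/
noncomputable def msr (Q : Set (Pt d)) (O : Pt d → Pt d → Prop) (v : Pt d) : ℕ :=
  Set.ncard {w | Relation.ReflTransGen O v w ∧ w ∈ Set.extremePoints ℝ Q}

theorem tg_first_step {v w : Pt d} (h : Relation.TransGen O v w) : ∃ z, O v z := by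
  induction h with
  | single h => exact ⟨_, h⟩
  | tail _ _ ih => exact ih

theorem msr_lt (hQ : IsPolytope Q) (hfac : IsFacial Q O) {v w : Pt d}
    (h : Relation.TransGen O v w) : msr Q O w < msr Q O v := by
  have hvE : v ∈ Set.extremePoints ℝ Q := by
    obtain ⟨z, hz⟩ := tg_first_step h
    exact (edge_vertices hQ hfac hz).1
  apply Set.ncard_lt_ncard
  · constructor
    · rintro z ⟨hz1, hz2⟩
      exact ⟨Relation.ReflTransGen.trans h.to_reflTransGen hz1, hz2⟩
    · intro hsub
      have hv : v ∈ {w_1 | Relation.ReflTransGen O v w_1 ∧ w_1 ∈ Set.extremePoints ℝ Q} :=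
        ⟨Relation.ReflTransGen.refl, hvE⟩
      have := hsub hv
      exact no_cycle hfac h this.1
  · exact (vertices_finite hQ).subset (fun z hz => hz.2)

theorem msr_pos (hQ : IsPolytope Q) {v : Pt d} (hv : v ∈ Set.extremePoints ℝ Q) :
    1 ≤ msr Q O v := by
  have hfin : {w | Relation.ReflTransGen O v w ∧ w ∈ Set.extremePoints ℝ Q}.Finite :=
    (vertices_finite hQ).subset (fun z hz => hz.2)
  exact (Set.ncard_pos hfin).2 ⟨v, Relation.ReflTransGen.refl, hv⟩

/-- Walk forward inside a face from any vertex to the sink. -/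
theorem walk_to_snk (hQ : IsPolytope Q) (hfac : IsFacial Q O) {F : Set (Pt d)}
    (hF : IsExposed ℝ Q F) {t : Pt d} (ht : IsSnkOf O F t) :
    ∀ n v, v ∈ Set.extremePoints ℝ Q → v ∈ F → msr Q O v ≤ n →
    ∃ c, SatChain O v t c ∧ ∀ z ∈ c, z ∈ F ∧ z ∈ Set.extremePoints ℝ Q := by
  intro n
  induction n with
  | zero =>
    intro v hv hvF hm
    exact absurd (le_trans (msr_pos hQ hv) hm) (by simp)
  | succ n ih =>
    intro v hv hvF hm
    by_cases hvt : v = t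
    · subst hvt
      exact ⟨[v], satchain_single v, by intro z hz; simp at hz; subst hz; exact ⟨hvF, hv⟩⟩
    · obtain ⟨w, hOw, hwF⟩ := out_of_ne_snk hfac hF ht hv hvF hvt
      have hwE : w ∈ Set.extremePoints ℝ Q := (edge_vertices hQ hfac hOw).2
      have hmw : msr Q O w ≤ n := by
        have := msr_lt hQ hfac (Relation.TransGen.single hOw)
        omega
      obtain ⟨c, hc, hcf⟩ := ih w hwE hwF hmw
      refine ⟨v :: c, satchain_cons hOw hc, ?_⟩
      intro z hz
      rcases List.mem_cons.1 hz with rfl | hz'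
      · exact ⟨hvF, hv⟩
      · exact hcf z hz'

theorem snk_mem_face {F : Set (Pt d)} (hF : IsExposed ℝ Q F) {t : Pt d}
    (ht : IsSnkOf O F t) : t ∈ F ∧ t ∈ Set.extremePoints ℝ Q :=
  ⟨ht.1.1, ep_face_sub hF ht.1⟩

theorem face_le_snk (hQ : IsPolytope Q) (hfac : IsFacial Q O) {F : Set (Pt d)}
    (hF : IsExposed ℝ Q F) {t v : Pt d} (ht : IsSnkOf O F t)
    (hv : v ∈ Set.extremePoints ℝ Q) (hvF : v ∈ F) : Relation.ReflTransGen O v t := by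
  obtain ⟨c, hc, _⟩ := walk_to_snk hQ hfac hF ht (msr Q O v) v hv hvF le_rfl
  exact satchain_rtg hc

/-- A saturated chain between any two comparable vertices. -/
theorem rtg_chain {u v : Pt d} (h : Relation.ReflTransGen O u v) :
    ∃ c, SatChain O u v c := by
  induction h using Relation.ReflTransGen.head_induction_on with
  | refl => exact ⟨[v], satchain_single v⟩
  | head hstep _ ih =>
    obtain ⟨c, hc⟩ := ih
    exact ⟨_ :: c, satchain_cons hstep hc⟩

/-- The 2-face spanned by two out-edges at a vertex. -/
theorem polygon_of_two (hQ : IsPolytope Q) (hfac : IsFacial Q O) (hds : DirSimple Q O)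
    {p a b : Pt d} (ha : O p a) (hb : O p b) (hab : a ≠ b) :
    ∃ F, IsExposed ℝ Q F ∧ pdim F = 2 ∧ p ∈ F ∧ a ∈ F ∧ b ∈ F := by
  have hpE : p ∈ Set.extremePoints ℝ Q := (edge_vertices hQ hfac ha).1
  have hall : ∀ x ∈ ({a, b} : Finset (Pt d)), O p x := by
    intro x hx
    rcases Finset.mem_insert.1 hx with rfl | hx'
    · exact ha
    · rw [Finset.mem_singleton] at hx'; subst hx'; exact hb
  obtain ⟨⟨F, ⟨hexp, hpF, hsegs, _⟩, hpd⟩, _⟩ := hds p hpE {a, b} hall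
  have hcard : ({a, b} : Finset (Pt d)).card = 2 := by
    rw [Finset.card_insert_of_notMem (by simp [hab]), Finset.card_singleton]
  rw [hcard] at hpd
  refine ⟨F, hexp, hpd, hpF, ?_, ?_⟩
  · exact hsegs a (by simp) (right_mem_segment ℝ p a)
  · exact hsegs b (by simp) (right_mem_segment ℝ p b)

/-- The base vertex is the source of such a 2-face. -/
theorem src_of_polygon (hQ : IsPolytope Q) (hfac : IsFacial Q O)
    {p a b : Pt d} {F : Set (Pt d)} (ha : O p a) (hb : O p b) (hab : a ≠ b)
    (hF : IsExposed ℝ Q F) (hpd : pdim F = 2) (hpF : p ∈ F) (haF : a ∈ F) (hbF : b ∈ F) :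
    IsSrcOf O F p := by
  have hpE : p ∈ Set.extremePoints ℝ Q := (edge_vertices hQ hfac ha).1
  refine ⟨ep_face hpE hpF hF.subset, ?_⟩
  intro y hyF hOyp
  have hya : y ≠ a := by rintro rfl; exact o_asymm hfac ha hOyp
  have hyb : y ≠ b := by rintro rfl; exact o_asymm hfac hb hOyp
  exact no3 hQ hF (le_of_eq hpd) hpF haF hbF hyF (hfac.1.1 _ _ ha) (hfac.1.1 _ _ hb)
    (pedge_symm (hfac.1.1 _ _ hOyp)) hab hya.symm hyb.symm

theorem satchain_penultimate {u v : Pt d} {c : List (Pt d)} (h : SatChain O u v c)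
    (hne : u ≠ v) : ∃ w, w ∈ c ∧ O w v ∧ Relation.ReflTransGen O u w := by
  induction c generalizing u with
  | nil => exact absurd rfl (satchain_ne_nil h)
  | cons x t ih =>
    obtain ⟨t', ht'⟩ := satchain_cons_elim h
    simp at ht'
    obtain ⟨rfl, rfl⟩ := ht'
    cases t with
    | nil =>
      obtain ⟨_, _, hl⟩ := h
      simp at hl
      exact absurd hl hne
    | cons w t2 =>
      obtain ⟨ho, hrest⟩ := satchain_cons_inv h
      by_cases hwv : w = v
      · subst hwv
        exact ⟨x, by simp, ho, Relation.ReflTransGen.refl⟩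
      · obtain ⟨w', hw'mem, hw'o, hw'r⟩ := ih hrest hwv
        exact ⟨w', by simp [hw'mem], hw'o, Relation.ReflTransGen.head ho hw'r⟩

/-- The order-convexity statement for 2-faces at a vertex. -/
def OCProp (Q : Set (Pt d)) (O : Pt d → Pt d → Prop) (v : Pt d) : Prop :=
  ∀ F, IsExposed ℝ Q F → pdim F = 2 → v ∈ F →
    ∀ t, IsSnkOf O F t → ∀ z, O v z → Relation.ReflTransGen O z t → z ∈ F

/-- The join statement: the sink of a 2-face spanned by two out-edges is the join. -/
def AProp (Q : Set (Pt d)) (O : Pt d → Pt d → Prop) (p : Pt d) : Prop :=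
  ∀ a b, O p a → O p b → a ≠ b → ∀ F, IsExposed ℝ Q F → pdim F = 2 →
    p ∈ F → a ∈ F → b ∈ F → ∀ t, IsSnkOf O F t →
    ∀ z, Relation.ReflTransGen O a z → Relation.ReflTransGen O b z →
      Relation.ReflTransGen O t z

/-- Climbing a saturated chain whose elements stay below `t` keeps it in `F`,
given order-convexity above the base point. -/
theorem climb (hQ : IsPolytope Q) (hfac : IsFacial Q O) {F : Set (Pt d)}
    (hF : IsExposed ℝ Q F) (hpd : pdim F = 2) {t : Pt d} (ht : IsSnkOf O F t) {p : Pt d}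
    (hOC : ∀ e, e ∈ Set.extremePoints ℝ Q → Relation.TransGen O p e → OCProp Q O e) :
    ∀ (c : List (Pt d)) (e v' : Pt d), SatChain O e v' c → e ∈ F →
      e ∈ Set.extremePoints ℝ Q → Relation.TransGen O p e →
      Relation.ReflTransGen O v' t → ∀ z ∈ c, z ∈ F := by
  intro c
  induction c with
  | nil => intro e v' h; exact absurd rfl (satchain_ne_nil h)
  | cons x rest ih =>
    intro e v' h heF heE htg hv't z hz
    obtain ⟨t', ht'⟩ := satchain_cons_elim h
    simp at ht'
    obtain ⟨rfl, rfl⟩ := ht'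
    rcases List.mem_cons.1 hz with rfl | hz'
    · exact heF
    · cases rest with
      | nil => simp at hz'
      | cons w t2 =>
        obtain ⟨ho, hrest⟩ := satchain_cons_inv h
        have hwt : Relation.ReflTransGen O w t :=
          Relation.ReflTransGen.trans (satchain_rtg hrest) hv't
        have hwF : w ∈ F := hOC x heE htg F hF hpd heF t ht w ho hwt
        have hwE : w ∈ Set.extremePoints ℝ Q := (edge_vertices hQ hfac ho).2
        exact ih w v' hrest hwF hwE (Relation.TransGen.tail htg ho) hv't z hz'

/-- The main simultaneous induction establishing `AProp` and `OCProp` everywhere. -/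
theorem main_induction (hQ : IsPolytope Q) (hfac : IsFacial Q O) (hds : DirSimple Q O)
    (hhasse : IsHasse O) (hlat : SkLattice Q O) :
    ∀ n v, v ∈ Set.extremePoints ℝ Q → msr Q O v ≤ n →
      AProp Q O v ∧ OCProp Q O v := by
  intro n
  induction n using Nat.strong_induction_on with
  | _ n IH =>
  intro v hvE hm
  have IH' : ∀ w, w ∈ Set.extremePoints ℝ Q → Relation.TransGen O v w →
      AProp Q O w ∧ OCProp Q O w := by
    intro w hwE htg
    have hlt : msr Q O w < n := lt_of_lt_of_le (msr_lt hQ hfac htg) hm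
    exact IH (msr Q O w) hlt w hwE le_rfl
  have hA : AProp Q O v := by
    intro a b hOa hOb hab F hF hpd hpF haF hbF t ht z hza hzb
    have haE : a ∈ Set.extremePoints ℝ Q := (edge_vertices hQ hfac hOa).2
    have hbE : b ∈ Set.extremePoints ℝ Q := (edge_vertices hQ hfac hOb).2
    obtain ⟨j, hjE, haj, hbj, hjmin⟩ := (hlat a haE b hbE).1
    have htE : t ∈ Set.extremePoints ℝ Q := (snk_mem_face hF ht).2
    have htF : t ∈ F := (snk_mem_face hF ht).1
    have hat : Relation.ReflTransGen O a t := face_le_snk hQ hfac hF ht haE haF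
    have hbt : Relation.ReflTransGen O b t := face_le_snk hQ hfac hF ht hbE hbF
    have hjt : Relation.ReflTransGen O j t := hjmin t htE hat hbt
    have hzE : z ∈ Set.extremePoints ℝ Q := rtg_extreme hQ hfac hza haE
    -- it suffices to show t = j
    suffices hteq : t = j by
      subst hteq
      exact hjmin z hzE hza hzb
    -- a ≠ j and b ≠ j
    have hanej : a ≠ j := by
      rintro rfl
      rcases hhasse v a hOa b (Relation.ReflTransGen.single hOb) hbj with rfl | rfl
      · exact o_irrefl hfac _ hOb
      · exact hab rfl
    have hbnej : b ≠ j := by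
      rintro rfl
      rcases hhasse v b hOb a (Relation.ReflTransGen.single hOa) haj with rfl | rfl
      · exact o_irrefl hfac _ hOa
      · exact hab rfl
    obtain ⟨ca, hca⟩ := rtg_chain haj
    obtain ⟨cb, hcb⟩ := rtg_chain hbj
    have hOCup : ∀ e, e ∈ Set.extremePoints ℝ Q → Relation.TransGen O v e → OCProp Q O e :=
      fun e he htg => (IH' e he htg).2
    have hcaF : ∀ x ∈ ca, x ∈ F :=
      climb hQ hfac hF hpd ht hOCup ca a j hca haF haE (Relation.TransGen.single hOa) hjt
    have hcbF : ∀ x ∈ cb, x ∈ F :=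
      climb hQ hfac hF hpd ht hOCup cb b j hcb hbF hbE (Relation.TransGen.single hOb) hjt
    have hjF : j ∈ F := hcaF j (satchain_last_mem hca)
    obtain ⟨wa, hwamem, hwaj, hawa⟩ := satchain_penultimate hca hanej
    obtain ⟨wb, hwbmem, hwbj, hbwb⟩ := satchain_penultimate hcb hbnej
    have hwaF : wa ∈ F := hcaF wa hwamem
    have hwbF : wb ∈ F := hcbF wb hwbmem
    have hwawb : wa ≠ wb := by
      rintro rfl
      have hwaE : wa ∈ Set.extremePoints ℝ Q := rtg_extreme hQ hfac hawa haE
      have := hjmin wa hwaE hawa hbwb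
      exact no_cycle hfac (Relation.TransGen.single hwaj) this
    by_cases hjt' : j = t
    · exact hjt'.symm
    · exfalso
      obtain ⟨y, hOjy, hyF⟩ := out_of_ne_snk hfac hF ht (rtg_extreme hQ hfac haj haE) hjF hjt'
      have hway : wa ≠ y := by rintro rfl; exact o_asymm hfac hwaj hOjy
      have hwby : wb ≠ y := by rintro rfl; exact o_asymm hfac hwbj hOjy
      exact no3 hQ hF (le_of_eq hpd) hjF hwaF hwbF hyF
        (pedge_symm (hfac.1.1 _ _ hwaj)) (pedge_symm (hfac.1.1 _ _ hwbj))
        (hfac.1.1 _ _ hOjy) hwawb hway hwby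
  refine ⟨hA, ?_⟩
  intro F hF hpd hvF t ht z hOvz hzt
  by_cases hzF : z ∈ F
  · exact hzF
  exfalso
  have hzE : z ∈ Set.extremePoints ℝ Q := (edge_vertices hQ hfac hOvz).2
  have hvt : v ≠ t := by
    rintro rfl
    exact no_cycle hfac (Relation.TransGen.single hOvz) hzt
  obtain ⟨y, hOvy, hyF⟩ := out_of_ne_snk hfac hF ht hvE hvF hvt
  have hyE : y ∈ Set.extremePoints ℝ Q := (edge_vertices hQ hfac hOvy).2
  have hyz : y ≠ z := by rintro rfl; exact hzF hyF
  obtain ⟨F', hexp', hpd', hvF', hyF', hzF'⟩ := polygon_of_two hQ hfac hds hOvy hOvz hyz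
  obtain ⟨s, hs, _⟩ := (hfac.2 F' hexp' ⟨v, hvF'⟩).2
  have hyt : Relation.ReflTransGen O y t := face_le_snk hQ hfac hF ht hyE hyF
  have hst : Relation.ReflTransGen O s t :=
    hA y z hOvy hOvz hyz F' hexp' hpd' hvF' hyF' hzF' s hs t hyt hzt
  have hys : y ≠ s := by
    rintro rfl
    have hzy : Relation.ReflTransGen O z y := face_le_snk hQ hfac hexp' hs hzE hzF'
    rcases hhasse v y hOvy z (Relation.ReflTransGen.single hOvz) hzy with rfl | rfl
    · exact o_irrefl hfac _ hOvz
    · exact hyz rfl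
  obtain ⟨cy, hcy, hcyf⟩ := walk_to_snk hQ hfac hexp' hs (msr Q O y) y hyE hyF' le_rfl
  obtain ⟨rest, hrest⟩ := satchain_cons_elim hcy
  cases rest with
  | nil =>
    subst hrest
    obtain ⟨_, _, hl⟩ := hcy
    simp at hl
    exact hys hl
  | cons y2 t2 =>
    subst hrest
    obtain ⟨hOyy2, hrest2⟩ := satchain_cons_inv hcy
    have hOCup : ∀ e, e ∈ Set.extremePoints ℝ Q → Relation.TransGen O v e → OCProp Q O e :=
      fun e he htg => (IH' e he htg).2
    have hcyF : ∀ x ∈ (y :: y2 :: t2), x ∈ F :=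
      climb hQ hfac hF hpd ht hOCup _ y s hcy hyF hyE (Relation.TransGen.single hOvy) hst
    have hy2F : y2 ∈ F := hcyF y2 (by simp)
    have hy2F' : y2 ∈ F' := (hcyf y2 (by simp)).1
    have hy2E : y2 ∈ Set.extremePoints ℝ Q := (edge_vertices hQ hfac hOyy2).2
    have hvy : v ≠ y := (hfac.1.1 _ _ hOvy).1
    have hyy2 : y ≠ y2 := (hfac.1.1 _ _ hOyy2).1
    have hvy2 : v ≠ y2 := ne_of_tg hfac (Relation.TransGen.tail (Relation.TransGen.single hOvy) hOyy2)
    -- the intersection F ∩ F' is a 2-dimensional exposed face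
    have hindep : LinearIndependent ℝ ![y - v, y2 - v] := by
      by_contra hdep
      have hne0 : y - v ≠ 0 := sub_ne_zero.2 (fun h => hvy h.symm)
      obtain ⟨c, hc⟩ := dep_collinear hne0 hdep
      exact not_collinear_extreme hvE hyE hy2E hvy hvy2 hyy2 hc
    have hinter : IsExposed ℝ Q (F ∩ F') := hF.inter hexp'
    have h2le : 2 ≤ pdim (F ∩ F') :=
      two_le_pdim ⟨hvF, hvF'⟩ ⟨hyF, hyF'⟩ ⟨hy2F, hy2F'⟩ hindep
    have hEq : F ∩ F' = F' := by
      apply face_eq_of_rank_le hinter hexp' Set.inter_subset_right ⟨v, hvF, hvF'⟩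
      rw [hpd']; exact h2le
    have : z ∈ F ∩ F' := by rw [hEq]; exact hzF'
    exact hzF this.1

/-! ### Paths in the move graph -/

def MovePath (Q : Set (Pt d)) (O : Pt d → Pt d → Prop) (P : List (Pt d) → Prop)
    (c1 c2 : List (Pt d)) : Prop :=
  ∃ (N : ℕ) (δ : ℕ → List (Pt d)), δ 0 = c1 ∧ δ N = c2 ∧
    (∀ i < N, MoveAdj Q O (δ i) (δ (i + 1))) ∧ ∀ i ≤ N, P (δ i)

theorem movepath_refl {P : List (Pt d) → Prop} {c : List (Pt d)} (h : P c) :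
    MovePath Q O P c c :=
  ⟨0, fun _ => c, rfl, rfl, by omega, fun _ _ => h⟩

theorem movepath_mono {P P' : List (Pt d) → Prop} {c1 c2 : List (Pt d)}
    (h : ∀ c, P c → P' c) (hp : MovePath Q O P c1 c2) : MovePath Q O P' c1 c2 := by
  obtain ⟨N, δ, h0, hN, hmv, hP⟩ := hp
  exact ⟨N, δ, h0, hN, hmv, fun i hi => h _ (hP i hi)⟩

theorem movepath_trans {P : List (Pt d) → Prop} {c1 c2 c3 : List (Pt d)}
    (h1 : MovePath Q O P c1 c2) (h2 : MovePath Q O P c2 c3) : MovePath Q O P c1 c3 := by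
  obtain ⟨N1, δa, ha0, haN, hamv, haP⟩ := h1
  obtain ⟨N2, δb, hb0, hbN, hbmv, hbP⟩ := h2
  refine ⟨N1 + N2, fun i => if i < N1 then δa i else δb (i - N1), ?_, ?_, ?_, ?_⟩
  · by_cases h : 0 < N1
    · simp [h, ha0]
    · have : N1 = 0 := by omega
      subst this
      simp [hb0, ← haN, ha0]
  · have : ¬ (N1 + N2 < N1) := by omega
    simp [this, hbN]
  · intro i hi
    by_cases h1' : i + 1 < N1
    · have h2' : i < N1 := by omega
      simp only [if_pos h1', if_pos h2']
      exact hamv i h2'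
    · by_cases h2' : i < N1
      · have hi1 : i + 1 = N1 := by omega
        simp only [if_pos h2', if_neg h1']
        rw [hi1]
        have h4 : δb (N1 - N1) = δa N1 := by rw [Nat.sub_self, hb0, haN]
        rw [h4, ← hi1]
        exact hamv i h2'
      · simp only [if_neg h1', if_neg h2']
        have hii : i + 1 - N1 = (i - N1) + 1 := by omega
        rw [hii]
        exact hbmv (i - N1) (by omega)
  · intro i hi
    by_cases h : i < N1
    · simp only [if_pos h]; exact haP i (by omega)
    · simp only [if_neg h]; exact hbP (i - N1) (by omega)

theorem movepath_single {P : List (Pt d) → Prop} {c1 c2 : List (Pt d)}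
    (hadj : MoveAdj Q O c1 c2) (h1 : P c1) (h2 : P c2) : MovePath Q O P c1 c2 := by
  refine ⟨1, fun i => if i = 0 then c1 else c2, by simp, by simp, ?_, ?_⟩
  · intro i hi
    have : i = 0 := by omega
    subst this
    simpa using hadj
  · intro i hi
    by_cases h : i = 0
    · simpa [h] using h1
    · simpa [h] using h2

theorem moveadj_lift {c1 c2 ρ σ : List (Pt d)} (h : MoveAdj Q O c1 c2) :
    MoveAdj Q O (ρ ++ c1 ++ σ) (ρ ++ c2 ++ σ) := by
  obtain ⟨F, hF, hpd, p, s, m1, m2, he1, he2, hne, hm1, hm2, hhd, htl⟩ := h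
  refine ⟨F, hF, hpd, ρ ++ p, s ++ σ, m1, m2, ?_, ?_, hne, hm1, hm2, hhd, htl⟩
  · rw [he1]; simp
  · rw [he2]; simp

theorem movepath_lift {P P' : List (Pt d) → Prop} {c1 c2 : List (Pt d)} (ρ σ : List (Pt d))
    (hP : ∀ c, P c → P' (ρ ++ c ++ σ)) (h : MovePath Q O P c1 c2) :
    MovePath Q O P' (ρ ++ c1 ++ σ) (ρ ++ c2 ++ σ) := by
  obtain ⟨N, δ, h0, hN, hmv, hPp⟩ := h
  refine ⟨N, fun i => ρ ++ δ i ++ σ, by simp only [h0], by simp only [hN], ?_, ?_⟩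
  · intro i hi
    exact moveadj_lift (hmv i hi)
  · intro i hi
    exact hP _ (hPp i hi)

/-- Finding the first element of a list satisfying a predicate. -/
theorem first_satisfying {α : Type*} (P : α → Prop) :
    ∀ (l : List α), (∃ z ∈ l, P z) →
    ∃ l1 z l2, l = l1 ++ z :: l2 ∧ P z ∧ ∀ y ∈ l1, ¬ P y := by
  intro l
  induction l with
  | nil => rintro ⟨z, hz, _⟩; simp at hz
  | cons x t ih =>
    intro hex
    by_cases hx : P x
    · exact ⟨[], x, t, by simp, hx, by simp⟩
    · have : ∃ z ∈ t, P z := by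
        obtain ⟨z, hz, hPz⟩ := hex
        rcases List.mem_cons.1 hz with rfl | hz'
        · exact absurd hPz hx
        · exact ⟨z, hz', hPz⟩
      obtain ⟨l1, z, l2, heq, hPz, hnone⟩ := ih this
      refine ⟨x :: l1, z, l2, by rw [heq]; rfl, hPz, ?_⟩
      intro y hy
      rcases List.mem_cons.1 hy with rfl | hy'
      · exact hx
      · exact hnone y hy'

theorem interval_lt (hQ : IsPolytope Q) (hfac : IsFacial Q O) {u v p q : Pt d}
    (htg : Relation.TransGen O u p) (hpq : Relation.ReflTransGen O p q)
    (hqv : Relation.ReflTransGen O q v) :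
    Set.ncard {z | Relation.ReflTransGen O p z ∧ Relation.ReflTransGen O z q} <
    Set.ncard {z | Relation.ReflTransGen O u z ∧ Relation.ReflTransGen O z v} := by
  have huE : u ∈ Set.extremePoints ℝ Q := by
    obtain ⟨z, hz⟩ := tg_first_step htg
    exact (edge_vertices hQ hfac hz).1
  apply Set.ncard_lt_ncard
  · constructor
    · rintro z ⟨hz1, hz2⟩
      exact ⟨Relation.ReflTransGen.trans htg.to_reflTransGen hz1,
        Relation.ReflTransGen.trans hz2 hqv⟩
    · intro hsub
      have hu : u ∈ {z | Relation.ReflTransGen O u z ∧ Relation.ReflTransGen O z v} :=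
        ⟨Relation.ReflTransGen.refl,
         Relation.ReflTransGen.trans htg.to_reflTransGen (Relation.ReflTransGen.trans hpq hqv)⟩
      exact no_cycle hfac htg (hsub hu).1
  · exact (vertices_finite hQ).subset (fun z hz => rtg_extreme hQ hfac hz.1 huE)

theorem conn (hQ : IsPolytope Q) (hfac : IsFacial Q O) (hds : DirSimple Q O)
    (hhasse : IsHasse O) (hlat : SkLattice Q O) :
    ∀ n (u v : Pt d) (c1 c2 : List (Pt d)), SatChain O u v c1 → SatChain O u v c2 →
      Set.ncard {z | Relation.ReflTransGen O u z ∧ Relation.ReflTransGen O z v} ≤ n →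
      MovePath Q O (fun c => SatChain O u v c ∧ ∀ z, z ∈ c1 → z ∈ c2 → z ∈ c) c1 c2 := by
  intro n
  induction n using Nat.strong_induction_on with
  | _ n IH =>
  intro u v c1 c2 h1 h2 hn
  by_cases hcc : c1 = c2
  · subst hcc; exact movepath_refl ⟨h1, fun z hz _ => hz⟩
  obtain ⟨t1, rfl⟩ := satchain_cons_elim h1
  obtain ⟨t2, rfl⟩ := satchain_cons_elim h2
  cases t1 with
  | nil =>
    have huv : u = v := by have := h1.2.2; simpa using this
    subst huv
    exact absurd (satchain_self hfac h2).symm hcc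
  | cons a r1 =>
  cases t2 with
  | nil =>
    have huv : u = v := by have := h2.2.2; simpa using this
    subst huv
    exact absurd (satchain_self hfac h1) hcc
  | cons b r2 =>
  have hOua : O u a := (satchain_cons_inv h1).1
  have hOub : O u b := (satchain_cons_inv h2).1
  have ht1 : SatChain O a v (a :: r1) := (satchain_cons_inv h1).2
  have ht2 : SatChain O b v (b :: r2) := (satchain_cons_inv h2).2
  have huE : u ∈ Set.extremePoints ℝ Q := (edge_vertices hQ hfac hOua).1
  have haE : a ∈ Set.extremePoints ℝ Q := (edge_vertices hQ hfac hOua).2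
  have hbE : b ∈ Set.extremePoints ℝ Q := (edge_vertices hQ hfac hOub).2
  by_cases hab : a = b
  · -- same first step: recurse on tails
    subst hab
    have hlt := interval_lt hQ hfac (Relation.TransGen.single hOua)
      (satchain_rtg ht1) (Relation.ReflTransGen.refl)
    have hsub := IH _ (lt_of_lt_of_le hlt hn) a v (a :: r1) (a :: r2) ht1 ht2 le_rfl
    have hlift := movepath_lift (Q := Q) (O := O)
      (P' := fun c => SatChain O u v c ∧
        ∀ z, z ∈ u :: a :: r1 → z ∈ u :: a :: r2 → z ∈ c)
      [u] [] ?_ hsub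
    · simpa using hlift
    · rintro c ⟨hcs, hcw⟩
      constructor
      · simpa using satchain_cons hOua hcs
      · intro z hz1 hz2
        rcases List.mem_cons.1 hz1 with rfl | hz1'
        · simp
        rcases List.mem_cons.1 hz2 with rfl | hz2'
        · simp
        have := hcw z hz1' hz2'
        simp [this]
  · -- divergence
    have hvm1 : v ∈ a :: r1 := satchain_last_mem ht1
    have hvm2 : v ∈ b :: r2 := satchain_last_mem ht2
    obtain ⟨P1, w, S1, heq1, hwin2, hfirst⟩ :=
      first_satisfying (· ∈ b :: r2) (a :: r1) ⟨v, hvm1, hvm2⟩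
    obtain ⟨P2, S2, heq2⟩ := List.append_of_mem hwin2
    have hsp1 : SatChain O a w (P1 ++ [w]) ∧ SatChain O w v (w :: S1) :=
      satchain_split (by rw [← heq1]; exact ht1)
    have hsp2 : SatChain O b w (P2 ++ [w]) ∧ SatChain O w v (w :: S2) :=
      satchain_split (by rw [← heq2]; exact ht2)
    have hwm1 : w ∈ a :: r1 := by rw [heq1]; exact List.mem_append_right _ List.mem_cons_self
    have haw : Relation.ReflTransGen O a w := (satchain_mem_between ht1 hwm1).1
    have hbw : Relation.ReflTransGen O b w := (satchain_mem_between ht2 hwin2).1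
    have hwv : Relation.ReflTransGen O w v := satchain_rtg hsp1.2
    -- the 2-face at the divergence
    obtain ⟨F, hF, hpd, huF, haF, hbF⟩ := polygon_of_two hQ hfac hds hOua hOub hab
    obtain ⟨tF, htF, _⟩ := (hfac.2 F hF ⟨u, huF⟩).2
    have hsrc : IsSrcOf O F u := src_of_polygon hQ hfac hOua hOub hab hF hpd huF haF hbF
    have hAu : AProp Q O u :=
      (main_induction hQ hfac hds hhasse hlat (msr Q O u) u huE le_rfl).1
    have htFw : Relation.ReflTransGen O tF w :=
      hAu a b hOua hOub hab F hF hpd huF haF hbF tF htF w haw hbw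
    obtain ⟨sa, hsa, hsaF⟩ := walk_to_snk hQ hfac hF htF (msr Q O a) a haE haF le_rfl
    obtain ⟨sb, hsb, hsbF⟩ := walk_to_snk hQ hfac hF htF (msr Q O b) b hbE hbF le_rfl
    obtain ⟨rw_, hrw⟩ := rtg_chain htFw
    have hmid1 : SatChain O a w (sa ++ rw_.tail) := satchain_append hsa hrw
    have hmid2 : SatChain O b w (sb ++ rw_.tail) := satchain_append hsb hrw
    -- structure of common elements
    have hW : ∀ z, z ∈ u :: a :: r1 → z ∈ u :: b :: r2 →
        z = u ∨ z = w ∨ (z ∈ S1 ∧ z ∈ S2) := by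
      intro z hz1 hz2
      rcases List.mem_cons.1 hz1 with rfl | hz1'
      · left; rfl
      have hz2' : z ∈ b :: r2 := by
        rcases List.mem_cons.1 hz2 with rfl | h
        · exact (no_cycle hfac (Relation.TransGen.single hOua)
            (satchain_mem_between ht1 hz1').1).elim
        · exact h
      rw [heq1] at hz1'
      rcases List.mem_append.1 hz1' with hP | hws
      · exact absurd hz2' (hfirst z hP)
      rcases List.mem_cons.1 hws with rfl | hS1
      · right; left; rfl
      right; right
      have htgwz : Relation.TransGen O w z := by
        cases S1 with
        | nil => simp at hS1
        | cons s0 ss =>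
          obtain ⟨hows, hrest⟩ := satchain_cons_inv hsp1.2
          exact Relation.TransGen.head' hows (satchain_mem_between hrest hS1).1
      refine ⟨hS1, ?_⟩
      rw [heq2] at hz2'
      rcases List.mem_append.1 hz2' with hP2 | hws2
      · exact (no_cycle hfac htgwz
          (satchain_mem_between hsp2.1 (List.mem_append_left [w] hP2)).2).elim
      rcases List.mem_cons.1 hws2 with rfl | hS2
      · exact (no_cycle hfac htgwz Relation.ReflTransGen.refl).elim
      · exact hS2
    -- target property
    have hchain1 : SatChain O u v (u :: ((sa ++ rw_.tail) ++ S1)) :=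
      satchain_cons hOua (by
        have := satchain_append hmid1 hsp1.2
        simpa using this)
    have hchain2 : SatChain O u v (u :: ((sb ++ rw_.tail) ++ S1)) :=
      satchain_cons hOub (by
        have := satchain_append hmid2 hsp1.2
        simpa using this)
    -- Segment 1 : c1 ⟶ u :: mid1 ++ S1
    have hseg1 : MovePath Q O (fun c => SatChain O u v c ∧
        ∀ z, z ∈ u :: a :: r1 → z ∈ u :: b :: r2 → z ∈ c)
        (u :: a :: r1) (u :: ((sa ++ rw_.tail) ++ S1)) := by
      have hlt := interval_lt hQ hfac (Relation.TransGen.single hOua) haw hwv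
      have hsub := IH _ (lt_of_lt_of_le hlt hn) a w (P1 ++ [w]) (sa ++ rw_.tail)
        hsp1.1 hmid1 le_rfl
      have hlift := movepath_lift (Q := Q) (O := O)
        (P' := fun c => SatChain O u v c ∧
          ∀ z, z ∈ u :: a :: r1 → z ∈ u :: b :: r2 → z ∈ c)
        [u] S1 ?_ hsub
      · have e1 : [u] ++ (P1 ++ [w]) ++ S1 = u :: a :: r1 := by
          rw [heq1]; simp
        have e2 : [u] ++ (sa ++ rw_.tail) ++ S1 = u :: ((sa ++ rw_.tail) ++ S1) := by simp
        rw [e1, e2] at hlift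
        exact hlift
      · rintro c ⟨hcs, hcw⟩
        constructor
        · have := satchain_cons hOua (satchain_append hcs hsp1.2)
          simpa using this
        · intro z hz1 hz2
          rcases hW z hz1 hz2 with rfl | rfl | ⟨hs1, _⟩
          · simp
          · have : z ∈ c := satchain_last_mem hcs
            simp [this]
          · simp [hs1]
    -- Segment 2 : the move across F
    have hseg2 : MovePath Q O (fun c => SatChain O u v c ∧
        ∀ z, z ∈ u :: a :: r1 → z ∈ u :: b :: r2 → z ∈ c)
        (u :: ((sa ++ rw_.tail) ++ S1)) (u :: ((sb ++ rw_.tail) ++ S1)) := by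
      have hadj : MoveAdj Q O (u :: ((sa ++ rw_.tail) ++ S1)) (u :: ((sb ++ rw_.tail) ++ S1)) := by
        refine ⟨F, hF, hpd, [], rw_.tail ++ S1, u :: sa, u :: sb, by simp, by simp, ?_, ?_, ?_, ?_, ?_⟩
        · intro h
          have hsasb : sa = sb := by
            injection h
          have : some a = some b := by
            rw [← hsa.2.1, ← hsb.2.1, hsasb]
          exact hab (by injection this)
        · intro x hx
          rcases List.mem_cons.1 hx with rfl | hx'
          · exact huF
          · exact (hsaF x hx').1
        · intro x hx
          rcases List.mem_cons.1 hx with rfl | hx'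
          · exact huF
          · exact (hsbF x hx').1
        · exact ⟨u, rfl, rfl, hsrc⟩
        · refine ⟨tF, ?_, ?_, htF⟩
          · obtain ⟨sa', rfl⟩ := satchain_cons_elim hsa
            rw [List.getLast?_cons_cons]
            exact hsa.2.2
          · obtain ⟨sb', rfl⟩ := satchain_cons_elim hsb
            rw [List.getLast?_cons_cons]
            exact hsb.2.2
      have hPT : ∀ cc : List (Pt d), cc = u :: ((sa ++ rw_.tail) ++ S1) ∨
          cc = u :: ((sb ++ rw_.tail) ++ S1) → SatChain O u v cc ∧
          ∀ z, z ∈ u :: a :: r1 → z ∈ u :: b :: r2 → z ∈ cc := by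
        rintro cc (rfl | rfl)
        · refine ⟨hchain1, ?_⟩
          intro z hz1 hz2
          rcases hW z hz1 hz2 with rfl | rfl | ⟨hs1, _⟩
          · simp
          · have : z ∈ sa ++ rw_.tail := satchain_last_mem hmid1
            simp at this ⊢
            tauto
          · simp [hs1]
        · refine ⟨hchain2, ?_⟩
          intro z hz1 hz2
          rcases hW z hz1 hz2 with rfl | rfl | ⟨hs1, _⟩
          · simp
          · have : z ∈ sb ++ rw_.tail := satchain_last_mem hmid2
            simp at this ⊢
            tauto
          · simp [hs1]
      exact movepath_single hadj (hPT _ (Or.inl rfl)) (hPT _ (Or.inr rfl))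
    -- Segment 3 : u :: mid2 ++ S1 ⟶ u :: (P2 ++ [w]) ++ S1
    have hseg3 : MovePath Q O (fun c => SatChain O u v c ∧
        ∀ z, z ∈ u :: a :: r1 → z ∈ u :: b :: r2 → z ∈ c)
        (u :: ((sb ++ rw_.tail) ++ S1)) (u :: ((P2 ++ [w]) ++ S1)) := by
      have hlt := interval_lt hQ hfac (Relation.TransGen.single hOub) hbw hwv
      have hsub := IH _ (lt_of_lt_of_le hlt hn) b w (sb ++ rw_.tail) (P2 ++ [w])
        hmid2 hsp2.1 le_rfl
      have hlift := movepath_lift (Q := Q) (O := O)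
        (P' := fun c => SatChain O u v c ∧
          ∀ z, z ∈ u :: a :: r1 → z ∈ u :: b :: r2 → z ∈ c)
        [u] S1 ?_ hsub
      · have e1 : [u] ++ (sb ++ rw_.tail) ++ S1 = u :: ((sb ++ rw_.tail) ++ S1) := by simp
        have e2 : [u] ++ (P2 ++ [w]) ++ S1 = u :: ((P2 ++ [w]) ++ S1) := by simp
        rw [e1, e2] at hlift
        exact hlift
      · rintro c ⟨hcs, hcw⟩
        constructor
        · have := satchain_cons hOub (satchain_append hcs hsp1.2)
          simpa using this
        · intro z hz1 hz2
          rcases hW z hz1 hz2 with rfl | rfl | ⟨hs1, _⟩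
          · simp
          · have : z ∈ c := satchain_last_mem hcs
            simp [this]
          · simp [hs1]
    -- Segment 4 : u :: (P2 ++ [w]) ++ S1 ⟶ c2
    have hseg4 : MovePath Q O (fun c => SatChain O u v c ∧
        ∀ z, z ∈ u :: a :: r1 → z ∈ u :: b :: r2 → z ∈ c)
        (u :: ((P2 ++ [w]) ++ S1)) (u :: b :: r2) := by
      have htguw : Relation.TransGen O u w := Relation.TransGen.head' hOua haw
      have hlt := interval_lt hQ hfac htguw hwv Relation.ReflTransGen.refl
      have hsub := IH _ (lt_of_lt_of_le hlt hn) w v (w :: S1) (w :: S2)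
        hsp1.2 hsp2.2 le_rfl
      have huP2w : SatChain O u w (u :: (P2 ++ [w])) := satchain_cons hOub hsp2.1
      have hlift := movepath_lift (Q := Q) (O := O)
        (P' := fun c => SatChain O u v c ∧
          ∀ z, z ∈ u :: a :: r1 → z ∈ u :: b :: r2 → z ∈ c)
        (u :: P2) [] ?_ hsub
      · have e1 : (u :: P2) ++ (w :: S1) ++ [] = u :: ((P2 ++ [w]) ++ S1) := by simp
        have e2 : (u :: P2) ++ (w :: S2) ++ [] = u :: b :: r2 := by
          rw [heq2]; simp
        rw [e1, e2] at hlift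
        exact hlift
      · rintro c ⟨hcs, hcw⟩
        obtain ⟨c', rfl⟩ := satchain_cons_elim hcs
        constructor
        · have := satchain_append huP2w hcs
          simp only [List.tail_cons] at this
          have e3 : (u :: (P2 ++ [w])) ++ c' = (u :: P2) ++ (w :: c') ++ [] := by simp
          rwa [e3] at this
        · intro z hz1 hz2
          rcases hW z hz1 hz2 with rfl | rfl | ⟨hs1, hs2⟩
          · simp
          · simp
          · have : z ∈ w :: c' := hcw z (List.mem_cons_of_mem _ hs1) (List.mem_cons_of_mem _ hs2)
            simp at this ⊢
            tauto
    exact movepath_trans hseg1 (movepath_trans hseg2 (movepath_trans hseg3 hseg4))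

/-- Strict comparison for tail members of a saturated chain. -/
theorem tail_strict {x' v₀ : Pt d} {B : List (Pt d)} (h : SatChain O x' v₀ (x' :: B)) :
    ∀ z ∈ B, Relation.TransGen O x' z := by
  intro z hz
  cases B with
  | nil => simp at hz
  | cons b0 bs =>
    obtain ⟨ho, hrest⟩ := satchain_cons_inv h
    exact Relation.TransGen.head' ho (satchain_mem_between hrest hz).1
end SkelAux
end Aux2

open SkelAux in
theorem lower_segment_transformed_first' {d : ℕ} (Q : Set (Pt d)) (O : Pt d → Pt d → Prop)
    (hQ : IsPolytope Q) (hfac : IsFacial Q O) (hds : DirSimple Q O)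
    (hhasse : IsHasse O) (hlat : SkLattice Q O)
    (u₀ v₀ : Pt d)
    (γ1 γ2 : List (Pt d)) (h1 : SatChain O u₀ v₀ γ1) (h2 : SatChain O u₀ v₀ γ2)
    (x' : Pt d) (hx'1 : x' ∈ γ1) (hx'2 : x' ∈ γ2) :
    ∃ (N : ℕ) (δ : ℕ → List (Pt d)) (k : ℕ), k ≤ N ∧
      δ 0 = γ1 ∧ δ N = γ2 ∧
      (∀ i < N, MoveAdj Q O (δ i) (δ (i + 1))) ∧
      (∀ i ≤ N, SatChain O u₀ v₀ (δ i) ∧ ∀ z, z ∈ γ1 → z ∈ γ2 → z ∈ δ i) ∧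
      (∀ i ≤ k, ∀ z, Relation.ReflTransGen O x' z → Relation.ReflTransGen O z v₀ →
        (z ∈ δ i ↔ z ∈ γ1)) ∧
      (∀ z, Relation.ReflTransGen O u₀ z → Relation.ReflTransGen O z x' →
        (z ∈ δ k ↔ z ∈ γ2)) := by
  obtain ⟨A1, B1, hg1⟩ := List.append_of_mem hx'1
  obtain ⟨A2, B2, hg2⟩ := List.append_of_mem hx'2
  subst hg1; subst hg2
  obtain ⟨hlo1, hhi1⟩ := satchain_split h1
  obtain ⟨hlo2, hhi2⟩ := satchain_split h2
  have hstr1 : ∀ z ∈ B1, Relation.TransGen O x' z := tail_strict hhi1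
  have hstr2 : ∀ z ∈ B2, Relation.TransGen O x' z := tail_strict hhi2
  have hc1 := conn hQ hfac hds hhasse hlat _ u₀ x' (A1 ++ [x']) (A2 ++ [x'])
    hlo1 hlo2 le_rfl
  have hc2 := conn hQ hfac hds hhasse hlat _ x' v₀ (x' :: B1) (x' :: B2)
    hhi1 hhi2 le_rfl
  obtain ⟨N1, δa, ha0, haN, hamv, haP⟩ := hc1
  obtain ⟨N2, δb, hb0, hbN, hbmv, hbP⟩ := hc2
  have hdich : ∀ z, z ∈ A1 ++ x' :: B1 → z ∈ A2 ++ x' :: B2 →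
      (z ∈ A1 ++ [x'] ∧ z ∈ A2 ++ [x']) ∨ (z ∈ x' :: B1 ∧ z ∈ x' :: B2) := by
    intro z hz1 hz2
    have hx'm : x' ∈ A1 ++ x' :: B1 := by
      rw [List.mem_append]; right; exact List.mem_cons_self
    rcases satchain_comparable h1 hz1 hx'm with hle | hge
    · left
      constructor
      · rcases List.mem_append.1 hz1 with h | h
        · exact List.mem_append_left _ h
        · rcases List.mem_cons.1 h with rfl | h'
          · exact List.mem_append_right _ (by simp)
          · exact (no_cycle hfac (hstr1 z h') hle).elim
      · rcases List.mem_append.1 hz2 with h | h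
        · exact List.mem_append_left _ h
        · rcases List.mem_cons.1 h with rfl | h'
          · exact List.mem_append_right _ (by simp)
          · exact (no_cycle hfac (hstr2 z h') hle).elim
    · right
      constructor
      · rcases List.mem_append.1 hz1 with h | h
        · have hzx : Relation.ReflTransGen O z x' :=
            (satchain_mem_between hlo1 (List.mem_append_left _ h)).2
          have : z = x' := rtg_antisymm hfac hzx hge
          subst this
          exact List.mem_cons_self
        · exact h
      · rcases List.mem_append.1 hz2 with h | h
        · have hzx : Relation.ReflTransGen O z x' :=
            (satchain_mem_between hlo2 (List.mem_append_left _ h)).2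
          have : z = x' := rtg_antisymm hfac hzx hge
          subst this
          exact List.mem_cons_self
        · exact h
  refine ⟨N1 + N2, fun i => if i ≤ N1 then δa i ++ B1 else A2 ++ δb (i - N1), N1,
    by omega, ?_, ?_, ?_, ?_, ?_, ?_⟩
  · -- δ 0 = γ1
    simp only [if_pos (by omega : 0 ≤ N1), ha0]
    simp
  · -- δ N = γ2
    by_cases h : N2 = 0
    · subst h
      have hBB : x' :: B1 = x' :: B2 := by rw [← hb0, hbN]
      simp only [Nat.add_zero, if_pos le_rfl, haN]
      rw [List.append_assoc, List.singleton_append, hBB]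
    · have : ¬ (N1 + N2 ≤ N1) := by omega
      simp only [if_neg this, Nat.add_sub_cancel_left, hbN]
  · -- moves
    intro i hi
    by_cases h1' : i + 1 ≤ N1
    · have h2' : i ≤ N1 := by omega
      simp only [if_pos h1', if_pos h2']
      have := moveadj_lift (ρ := []) (σ := B1) (hamv i (by omega))
      simpa using this
    · by_cases h2' : i ≤ N1
      · have hiN : i = N1 := by omega
        subst hiN
        have hN2 : 0 < N2 := by omega
        simp only [if_pos h2', if_neg h1']
        have hmv := moveadj_lift (ρ := A2) (σ := []) (hbmv 0 hN2)
        have e1 : δa i ++ B1 = A2 ++ δb 0 ++ [] := by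
          rw [haN, hb0]; simp
        have e2 : A2 ++ δb (i + 1 - i) = A2 ++ δb (0 + 1) ++ [] := by
          simp only [List.append_nil]
          congr 2
          omega
        rw [e1, e2]
        exact hmv
      · simp only [if_neg h1', if_neg h2']
        have hii : i + 1 - N1 = (i - N1) + 1 := by omega
        rw [hii]
        have := moveadj_lift (ρ := A2) (σ := []) (hbmv (i - N1) (by omega))
        simpa using this
  · -- SatChain and common containment
    intro i hi
    by_cases h : i ≤ N1
    · simp only [if_pos h]
      obtain ⟨hcs, hcw⟩ := haP i h
      constructor
      · have := satchain_append hcs hhi1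
        simpa using this
      · intro z hz1 hz2
        rcases hdich z hz1 hz2 with ⟨hA, hA'⟩ | ⟨hB, hB'⟩
        · exact List.mem_append_left _ (hcw z hA hA')
        · rcases List.mem_cons.1 hB with rfl | h'
          · exact List.mem_append_left _ (satchain_last_mem hcs)
          · exact List.mem_append_right _ h'
    · simp only [if_neg h]
      obtain ⟨hcs, hcw⟩ := hbP (i - N1) (by omega)
      obtain ⟨c', hc'⟩ := satchain_cons_elim hcs
      constructor
      · have := satchain_append hlo2 hcs
        rw [hc'] at this ⊢
        simpa using this
      · intro z hz1 hz2
        rcases hdich z hz1 hz2 with ⟨hA, hA'⟩ | ⟨hB, hB'⟩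
        · rcases List.mem_append.1 hA' with h' | h'
          · exact List.mem_append_left _ h'
          · simp at h'
            subst h'
            rw [hc']
            exact List.mem_append_right _ (List.mem_cons_self)
        · exact List.mem_append_right _ (hcw z hB hB')
  · -- agreement with γ1 above x'
    intro i hik z hx'z hzv
    simp only [if_pos hik]
    obtain ⟨hcs, _⟩ := haP i hik
    constructor
    · intro hz
      rcases List.mem_append.1 hz with h' | h'
      · have hzx : Relation.ReflTransGen O z x' := (satchain_mem_between hcs h').2
        have : z = x' := rtg_antisymm hfac hzx hx'z
        subst this
        exact List.mem_append_right _ (List.mem_cons_self)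
      · exact List.mem_append_right _ (List.mem_cons_of_mem _ h')
    · intro hz
      rcases List.mem_append.1 hz with h' | h'
      · have hzx : Relation.ReflTransGen O z x' :=
          (satchain_mem_between hlo1 (List.mem_append_left _ h')).2
        have : z = x' := rtg_antisymm hfac hzx hx'z
        subst this
        exact List.mem_append_left _ (satchain_last_mem hcs)
      · rcases List.mem_cons.1 h' with rfl | h''
        · exact List.mem_append_left _ (satchain_last_mem hcs)
        · exact List.mem_append_right _ h''
  · -- agreement with γ2 below x'
    intro z hu0z hzx
    simp only [if_pos le_rfl, haN]
    constructor
    · intro hz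
      rcases List.mem_append.1 hz with h' | h'
      · rcases List.mem_append.1 h' with h'' | h''
        · exact List.mem_append_left _ h''
        · simp at h''
          subst h''
          exact List.mem_append_right _ (List.mem_cons_self)
      · exact (no_cycle hfac (hstr1 z h') hzx).elim
    · intro hz
      rcases List.mem_append.1 hz with h' | h'
      · exact List.mem_append_left _ (List.mem_append_left _ h')
      · rcases List.mem_cons.1 h' with rfl | h''
        · exact List.mem_append_left _ (List.mem_append_right _ (by simp))
        · exact (no_cycle hfac (hstr2 z h'') hzx).elim


/-- Let `Q` be `O`-directionally simple with `O` a facial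
orientation which is the Hasse diagram of a lattice `L = P(Q,O)`, and let
`γ1, γ2` be maximal chains of `L` (saturated chains from the global source `u₀`
to the global sink `v₀`). Suppose `x <_L x'` both lie on `γ1` and `γ2`, with `x`
followed by distinct elements in `γ1` and `γ2`. Then there is a path from `γ1`
to `γ2` in the move graph, all of whose chains contain every vertex of
`γ1 ∩ γ2`, together with an index `k` such that every chain up to step `k`
agrees with `γ1` on `[x', v₀]`, and the chain at step `k` agrees with `γ2` on
`[u₀, x']`. -/
theorem lower_segment_transformed_first {d : ℕ} (Q : Set (Pt d)) (O : Pt d → Pt d → Prop)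
    (hQ : IsPolytope Q) (hfac : IsFacial Q O) (hds : DirSimple Q O)
    (hhasse : IsHasse O) (hlat : SkLattice Q O)
    (u₀ v₀ : Pt d) (hsrc : IsSrcOf O Q u₀) (hsnk : IsSnkOf O Q v₀)
    (γ1 γ2 : List (Pt d)) (h1 : SatChain O u₀ v₀ γ1) (h2 : SatChain O u₀ v₀ γ2)
    (x x' : Pt d) (hxx' : Relation.TransGen O x x')
    (hx1 : x ∈ γ1) (hx2 : x ∈ γ2) (hx'1 : x' ∈ γ1) (hx'2 : x' ∈ γ2)
    (y1 y2 : Pt d) (hy : y1 ≠ y2)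
    (hy1 : [x, y1] <:+: γ1) (hy2 : [x, y2] <:+: γ2) :
    ∃ (N : ℕ) (δ : ℕ → List (Pt d)) (k : ℕ), k ≤ N ∧
      δ 0 = γ1 ∧ δ N = γ2 ∧
      (∀ i < N, MoveAdj Q O (δ i) (δ (i + 1))) ∧
      (∀ i ≤ N, SatChain O u₀ v₀ (δ i) ∧ ∀ z, z ∈ γ1 → z ∈ γ2 → z ∈ δ i) ∧
      (∀ i ≤ k, ∀ z, Relation.ReflTransGen O x' z → Relation.ReflTransGen O z v₀ →
        (z ∈ δ i ↔ z ∈ γ1)) ∧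
      (∀ z, Relation.ReflTransGen O u₀ z → Relation.ReflTransGen O z x' →
        (z ∈ δ k ↔ z ∈ γ2)) :=
  lower_segment_transformed_first' Q O hQ hfac hds hhasse hlat u₀ v₀ γ1 γ2 h1 h2 x' hx'1 hx'2
end

section
/- Let Q_{w_0} = conv{**z** : z ∈ S_n} be the permutahedron and let O_ρ be the orientation of its 1-skeleton induced by ρ = (n, n−1, …, 1). Then the 1-skeleton poset P(Q_{w_0}, O_ρ) equals the right weak order on S_n (u ≤_R v if and only if ℓ(u) + ℓ(u^{-1}v) = ℓ(v)), and O_ρ is the Hasse diagram (transitive reduction) of this poset. -/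
open Relation

/-- The symmetric group `S_n`, realized as permutations of `Fin n`. -/
abbrev SymGrp (n : ℕ) := Equiv.Perm (Fin n)

/-- Coxeter length of a permutation: its number of inversions. -/
def invLen {n : ℕ} (z : SymGrp n) : ℕ :=
  (Finset.univ.filter (fun p : Fin n × Fin n => p.1 < p.2 ∧ z p.2 < z p.1)).card

/-- Bruhat order on `S_n`: generated by multiplication by a transposition which
increases length. -/
def bruhatLE {n : ℕ} (u v : SymGrp n) : Prop :=
  Relation.ReflTransGen
    (fun a b => (∃ t : SymGrp n, t.IsSwap ∧ b = a * t) ∧ invLen a < invLen b) u v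

/-- The point `**z** = (z⁻¹(1), …, z⁻¹(n)) ∈ ℝⁿ` associated to a permutation
(indices shifted to be 1-based). -/
def pvec {n : ℕ} (z : SymGrp n) : Fin n → ℝ := fun i => (((z⁻¹ i : Fin n) : ℕ) : ℝ) + 1

/-- The Bruhat interval polytope `Q_{u,v}`. -/
def BIP {n : ℕ} (u v : SymGrp n) : Set (Fin n → ℝ) :=
  convexHull ℝ {x | ∃ z : SymGrp n, bruhatLE u z ∧ bruhatLE z v ∧ x = pvec z}

/-- The Bruhat interval polytope `Q_w = Q_{e,w}`. -/
def BIPw {n : ℕ} (w : SymGrp n) : Set (Fin n → ℝ) := BIP 1 w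

/-- The segment from `x` to `y` is an edge (1-dimensional exposed face; i.e. an
exposed face which is a segment between two distinct points) of `Q`. -/
def IsEdgeOf {n : ℕ} (Q : Set (Fin n → ℝ)) (x y : Fin n → ℝ) : Prop :=
  x ≠ y ∧ IsExposed ℝ Q (segment ℝ x y)

/-- Cover relation `u ⋖_w v` of the poset `P_w`: both lie in `[e,w]`,
`ℓ(v) = ℓ(u) + 1`, and the segment from `**u**` to `**v**` is an edge of `Q_w`. -/
def covW {n : ℕ} (w u v : SymGrp n) : Prop :=
  bruhatLE u w ∧ bruhatLE v w ∧ invLen v = invLen u + 1 ∧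
    IsEdgeOf (BIPw w) (pvec u) (pvec v)

/-- The order `≤_w` of the poset `P_w`, generated by the cover relations `⋖_w`. -/
def lew {n : ℕ} (w : SymGrp n) (u v : SymGrp n) : Prop :=
  Relation.ReflTransGen (covW w) u v

/-- The set `A_w(u,v)` of atoms of the interval `[u,v]_w`: elements of the
interval covering `u` in `P_w`. -/
def atomsW {n : ℕ} (w u v : SymGrp n) : Set (SymGrp n) :=
  {a | lew w u a ∧ a ≠ u ∧ lew w a v ∧ ∀ z, lew w u z → lew w z a → z = u ∨ z = a}

/-- The cost vector `ρ = (n, n-1, …, 1)`. -/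
def rho (n : ℕ) : Fin n → ℝ := fun i => (n : ℝ) - ((i : ℕ) : ℝ)

/-- The orientation `O_ρ` of the 1-skeleton of `Q_w`: an edge is directed toward
the endpoint with larger inner product with `ρ`. -/
def orho {n : ℕ} (w : SymGrp n) (x y : Fin n → ℝ) : Prop :=
  IsEdgeOf (BIPw w) x y ∧ (∑ i, rho n i * x i) < (∑ i, rho n i * y i)

/-- `F` is the (unique) minimal exposed face of `Q_w` containing the vertex `**u**`
and the edges from `**u**` to `**a**` for `a ∈ T`. -/
def MinFaceW {n : ℕ} (w u : SymGrp n) (T : Set (SymGrp n)) (F : Set (Fin n → ℝ)) : Prop :=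
  IsExposed ℝ (BIPw w) F ∧ pvec u ∈ F ∧ (∀ a ∈ T, segment ℝ (pvec u) (pvec a) ⊆ F) ∧
    ∀ F', IsExposed ℝ (BIPw w) F' → pvec u ∈ F' → (∀ a ∈ T, segment ℝ (pvec u) (pvec a) ⊆ F') →
      F ⊆ F'

/-- `j` is the join in the lattice `P_w` of the set `S` together with `u`
(so the join of the empty set is `u`): i.e. `j` is the least upper bound in `P_w`
of `S ∪ {u}`. -/
def IsJoinW {n : ℕ} (w u : SymGrp n) (S : Set (SymGrp n)) (j : SymGrp n) : Prop :=
  bruhatLE j w ∧ lew w u j ∧ (∀ a ∈ S, lew w a j) ∧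
    ∀ z, bruhatLE z w → lew w u z → (∀ a ∈ S, lew w a z) → lew w j z

/-- The permutahedron: the convex hull of the points `**z**` for `z ∈ S_n`. -/
def PermPoly (n : ℕ) : Set (Fin n → ℝ) :=
  convexHull ℝ {x | ∃ z : SymGrp n, x = pvec z}

/-- The orientation `O_ρ` of the 1-skeleton of the permutahedron: each edge is
directed toward the endpoint with larger inner product with `ρ = (n, …, 1)`. -/
def oPerm (n : ℕ) (x y : Fin n → ℝ) : Prop :=
  (x ≠ y ∧ IsExposed ℝ (PermPoly n) (segment ℝ x y)) ∧
    (∑ i, rho n i * x i) < (∑ i, rho n i * y i)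

/-- Right weak order on `S_n`: `u ≤_R v` iff `ℓ(u) + ℓ(u⁻¹ v) = ℓ(v)`. -/
def wleR {n : ℕ} (u v : SymGrp n) : Prop :=
  invLen u + invLen (u⁻¹ * v) = invLen v

theorem Equiv.Perm.inv_apply_self {α : Type*} (f : Equiv.Perm α) (x : α) : f⁻¹ (f x) = x :=
  f.symm_apply_apply x

theorem Equiv.Perm.apply_inv_self {α : Type*} (f : Equiv.Perm α) (x : α) : f (f⁻¹ x) = x :=
  f.apply_symm_apply x

namespace Skel

/-- The inversion set. -/
def Inv {n : ℕ} (z : SymGrp n) : Finset (Fin n × Fin n) :=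
  Finset.univ.filter (fun p : Fin n × Fin n => p.1 < p.2 ∧ z p.2 < z p.1)

lemma invLen_eq {n : ℕ} (z : SymGrp n) : invLen z = (Inv z).card := rfl

lemma mem_Inv {n : ℕ} {z : SymGrp n} {p : Fin n × Fin n} :
    p ∈ Inv z ↔ p.1 < p.2 ∧ z p.2 < z p.1 := by simp [Inv]

lemma perm_strictMono_eq_one {n : ℕ} {σ : SymGrp n} (h : StrictMono ⇑σ) : σ = 1 := by
  have h2 : ⇑σ = id :=
    StrictMono.eq_id h
  ext x
  simp [show ⇑σ = id from h2]

lemma strictMono_of_adj {n : ℕ} (f : Fin n → Fin n)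
    (h : ∀ (k : ℕ) (hk : k + 1 < n), f ⟨k, Nat.lt_of_succ_lt hk⟩ < f ⟨k+1, hk⟩) :
    StrictMono f := by
  cases n with
  | zero => intro a; exact absurd a.2 (by omega)
  | succ m =>
    rw [Fin.strictMono_iff_lt_succ]
    intro i
    have hk : (i : ℕ) + 1 < m + 1 := by omega
    exact h i hk

/-- The adjacent transposition `s_k = (k, k+1)`. -/
def aswap {n : ℕ} (k : ℕ) (h : k + 1 < n) : SymGrp n :=
  Equiv.swap ⟨k, Nat.lt_of_succ_lt h⟩ ⟨k+1, h⟩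

lemma aswap_coe {n : ℕ} (k : ℕ) (h : k + 1 < n) (x : Fin n) :
    ((aswap k h x : Fin n) : ℕ) = if (x:ℕ) = k then k+1 else if (x:ℕ) = k+1 then k else x := by
  rcases eq_or_ne x ⟨k, Nat.lt_of_succ_lt h⟩ with rfl | hx
  · simp [aswap, Equiv.swap_apply_left]
  · rcases eq_or_ne x ⟨k+1, h⟩ with rfl | hx'
    · simp [aswap, Equiv.swap_apply_right, Fin.ext_iff]
    · rw [aswap, Equiv.swap_apply_of_ne_of_ne hx hx']
      rw [Fin.ne_iff_vne] at hx hx'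
      simp only [if_neg hx, if_neg hx']

lemma aswap_lt {n : ℕ} {k : ℕ} (h : k + 1 < n) {i j : Fin n} (hij : i < j)
    (hne : ¬((i:ℕ) = k ∧ (j:ℕ) = k+1)) : aswap k h i < aswap k h j := by
  have hi := aswap_coe k h i
  have hj := aswap_coe k h j
  rw [Fin.lt_def] at hij ⊢
  split_ifs at hi hj <;> omega

lemma aswap_inv {n : ℕ} (k : ℕ) (h : k + 1 < n) : (aswap k h)⁻¹ = aswap k h :=
  Equiv.swap_inv _ _

lemma aswap_left {n : ℕ} (k : ℕ) (h : k + 1 < n) :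
    aswap k h ⟨k, Nat.lt_of_succ_lt h⟩ = ⟨k+1, h⟩ := Equiv.swap_apply_left _ _

lemma aswap_right {n : ℕ} (k : ℕ) (h : k + 1 < n) :
    aswap k h ⟨k+1, h⟩ = ⟨k, Nat.lt_of_succ_lt h⟩ := Equiv.swap_apply_right _ _

lemma aswap_ne_one {n : ℕ} (k : ℕ) (h : k + 1 < n) : aswap k h ≠ 1 := by
  simp only [aswap, Ne, Equiv.swap_eq_one_iff, Fin.ext_iff]
  omega

lemma aswap_fix {n : ℕ} (k : ℕ) (h : k + 1 < n) {x : Fin n} (h1 : (x:ℕ) ≠ k)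
    (h2 : (x:ℕ) ≠ k+1) : aswap k h x = x := by
  rw [Fin.ext_iff, aswap_coe, if_neg h1, if_neg h2]

lemma Inv_erase_card {n : ℕ} (u : SymGrp n) (k : ℕ) (h : k + 1 < n) :
    ((Inv (u * aswap k h)).erase (⟨k, Nat.lt_of_succ_lt h⟩, ⟨k+1, h⟩)).card
      = ((Inv u).erase (⟨k, Nat.lt_of_succ_lt h⟩, ⟨k+1, h⟩)).card := by
  set s := aswap k h with hs
  set K : Fin n × Fin n := (⟨k, Nat.lt_of_succ_lt h⟩, ⟨k+1, h⟩) with hK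
  have hss : ∀ x : Fin n, s (s x) = x := fun x => by
    rw [hs, aswap]; exact Equiv.swap_apply_self _ _ _
  have hmap : ∀ (z : SymGrp n) (p : Fin n × Fin n), p ∈ (Inv (z * s)).erase K →
      (s p.1, s p.2) ∈ (Inv z).erase K := by
    intro z p hp
    obtain ⟨hpne, hpmem⟩ := Finset.mem_erase.mp hp
    rw [mem_Inv] at hpmem
    obtain ⟨h12, hinv⟩ := hpmem
    have hord : s p.1 < s p.2 := by
      refine aswap_lt h h12 ?_
      intro ⟨ha, hb⟩
      exact hpne (Prod.ext (Fin.ext ha) (Fin.ext hb))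
    refine Finset.mem_erase.mpr ⟨?_, mem_Inv.mpr ⟨hord, ?_⟩⟩
    · intro hcon
      have h1 : s p.1 = K.1 := congrArg Prod.fst hcon
      have h2 : s p.2 = K.2 := congrArg Prod.snd hcon
      have : p.1 = s K.1 := by rw [← h1, hss]
      have h1' : p.1 = K.2 := by rw [this, hK, hs, aswap_left]
      have : p.2 = s K.2 := by rw [← h2, hss]
      have h2' : p.2 = K.1 := by rw [this, hK, hs, aswap_right]
      rw [h1', h2'] at h12
      rw [hK] at h12
      simp [Fin.lt_def] at h12
    · simpa [Equiv.Perm.mul_apply] using hinv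
  have key : ∀ p ∈ (Inv (u * s)).erase K, (s p.1, s p.2) ∈ (Inv u).erase K := hmap u
  have key2 : ∀ p ∈ (Inv u).erase K, (s p.1, s p.2) ∈ (Inv (u * s)).erase K := by
    intro p hp
    have : Inv u = Inv ((u * s) * s) := by
      congr 1
      ext x
      simp [Equiv.Perm.mul_apply, hss]
    rw [this] at hp
    exact hmap (u * s) p hp
  refine Finset.card_bij' (fun p _ => (s p.1, s p.2)) (fun p _ => (s p.1, s p.2))
    key key2 ?_ ?_
  · intro p _; simp [hss]
  · intro p _; simp [hss]

lemma invLen_mul_aswap_of_lt {n : ℕ} {u : SymGrp n} {k : ℕ} {h : k + 1 < n}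
    (hlt : u ⟨k, Nat.lt_of_succ_lt h⟩ < u ⟨k+1, h⟩) :
    invLen (u * aswap k h) = invLen u + 1 := by
  set K : Fin n × Fin n := (⟨k, Nat.lt_of_succ_lt h⟩, ⟨k+1, h⟩) with hK
  have hmem : K ∈ Inv (u * aswap k h) := by
    rw [mem_Inv]
    constructor
    · simp [hK, Fin.lt_def]
    · simpa [hK, Equiv.Perm.mul_apply, aswap_left, aswap_right] using hlt
  have hnmem : K ∉ Inv u := by
    rw [mem_Inv]
    rintro ⟨-, hcon⟩
    exact absurd hlt (not_lt.mpr hcon.le)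
  have h1 := Finset.card_erase_add_one hmem
  have h2 := Finset.erase_eq_of_notMem hnmem
  have h3 := Inv_erase_card u k h
  rw [invLen_eq, invLen_eq, ← h1, h3, h2]

lemma invLen_mul_aswap_of_gt {n : ℕ} {u : SymGrp n} {k : ℕ} {h : k + 1 < n}
    (hlt : u ⟨k+1, h⟩ < u ⟨k, Nat.lt_of_succ_lt h⟩) :
    invLen u = invLen (u * aswap k h) + 1 := by
  set v := u * aswap k h with hv
  have hu : u = v * aswap k h := by
    rw [hv, mul_assoc]
    have : aswap k h * aswap k h = 1 := by
      rw [aswap, Equiv.swap_mul_self]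
    rw [this, mul_one]
  have : v ⟨k, Nat.lt_of_succ_lt h⟩ < v ⟨k+1, h⟩ := by
    simpa [hv, Equiv.Perm.mul_apply, aswap_left, aswap_right] using hlt
  rw [hu]
  exact invLen_mul_aswap_of_lt this

lemma invLen_inv {n : ℕ} (z : SymGrp n) : invLen z⁻¹ = invLen z := by
  rw [invLen_eq, invLen_eq]
  refine Finset.card_bij' (fun p _ => (z⁻¹ p.2, z⁻¹ p.1)) (fun p _ => (z p.2, z p.1))
    ?_ ?_ ?_ ?_
  · intro p hp
    rw [mem_Inv] at hp ⊢
    refine ⟨hp.2, ?_⟩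
    simpa using hp.1
  · intro p hp
    rw [mem_Inv] at hp ⊢
    refine ⟨hp.2, ?_⟩
    simpa using hp.1
  · intro p _; simp
  · intro p _; simp

lemma invLen_mul_le {n : ℕ} (x y : SymGrp n) : invLen (x * y) ≤ invLen x + invLen y := by
  classical
  rw [invLen_eq, invLen_eq, invLen_eq]
  have hsplit := Finset.card_filter_add_card_filter_not
    (s := Inv (x * y)) (fun p : Fin n × Fin n => y p.2 < y p.1)
  set A := (Inv (x * y)).filter (fun p : Fin n × Fin n => y p.2 < y p.1) with hA
  set B := (Inv (x * y)).filter (fun p : Fin n × Fin n => ¬ y p.2 < y p.1) with hB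
  have hAle : A.card ≤ (Inv y).card := by
    apply Finset.card_le_card
    intro p hp
    rw [hA, Finset.mem_filter, mem_Inv] at hp
    exact mem_Inv.mpr ⟨hp.1.1, hp.2⟩
  have hBle : B.card ≤ (Inv x).card := by
    refine Finset.card_le_card_of_injOn (fun p => (y p.1, y p.2)) ?_ ?_
    · intro p hp
      rw [hB, Finset.mem_coe, Finset.mem_filter, mem_Inv] at hp
      obtain ⟨⟨h12, hxy⟩, hny⟩ := hp
      have hne : y p.1 ≠ y p.2 := fun hc => absurd (y.injective hc) h12.ne
      have : y p.1 < y p.2 := lt_of_le_of_ne (not_lt.mp hny) hne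
      exact Finset.mem_coe.mpr (mem_Inv.mpr ⟨this, by simpa [Equiv.Perm.mul_apply] using hxy⟩)
    · intro p _ q _ hpq
      have h1 : y p.1 = y q.1 := congrArg Prod.fst hpq
      have h2 : y p.2 = y q.2 := congrArg Prod.snd hpq
      exact Prod.ext (y.injective h1) (y.injective h2)
  omega

lemma invLen_eq_zero {n : ℕ} {z : SymGrp n} : invLen z = 0 ↔ z = 1 := by
  constructor
  · intro h
    apply perm_strictMono_eq_one
    intro i j hij
    by_contra hc
    have hne : z i ≠ z j := fun hc2 => absurd (z.injective hc2) hij.ne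
    have : z j < z i := lt_of_le_of_ne (not_lt.mp hc) (Ne.symm hne)
    have : (i, j) ∈ Inv z := mem_Inv.mpr ⟨hij, this⟩
    have := Finset.card_pos.mpr ⟨_, this⟩
    rw [invLen_eq] at h
    omega
  · rintro rfl
    rw [invLen_eq]
    rw [Finset.card_eq_zero]
    ext p
    simp only [mem_Inv, Finset.notMem_empty, iff_false]
    rintro ⟨h1, h2⟩
    simp at h2
    exact absurd h1 (not_lt.mpr h2.le)

lemma invLen_aswap {n : ℕ} (k : ℕ) (h : k + 1 < n) : invLen (aswap k h) = 1 := by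
  have : aswap k h = 1 * aswap k h := (one_mul _).symm
  rw [this, invLen_mul_aswap_of_lt ?_, invLen_eq_zero.mpr rfl]
  simp [Fin.lt_def]

end Skel

namespace Skel

/-- A covering step of the right weak order. -/
def stepR {n : ℕ} (u v : SymGrp n) : Prop :=
  ∃ (k : ℕ) (hk : k + 1 < n), v = u * aswap k hk ∧ invLen v = invLen u + 1

lemma wleR_refl {n : ℕ} (u : SymGrp n) : wleR u u := by
  simp [wleR, invLen_eq_zero.mpr rfl]

lemma wleR_trans {n : ℕ} {u v w : SymGrp n} (h1 : wleR u v) (h2 : wleR v w) :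
    wleR u w := by
  unfold wleR at *
  have s1 : invLen (u⁻¹ * w) ≤ invLen (u⁻¹ * v) + invLen (v⁻¹ * w) := by
    have := invLen_mul_le (u⁻¹ * v) (v⁻¹ * w)
    rwa [show (u⁻¹ * v) * (v⁻¹ * w) = u⁻¹ * w by group] at this
  have s2 : invLen w ≤ invLen u + invLen (u⁻¹ * w) := by
    have := invLen_mul_le u (u⁻¹ * w)
    rwa [show u * (u⁻¹ * w) = w by group] at this
  omega

lemma stepR_wleR {n : ℕ} {u v : SymGrp n} (h : stepR u v) : wleR u v := by
  obtain ⟨k, hk, rfl, hlen⟩ := h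
  unfold wleR
  rw [show u⁻¹ * (u * aswap k hk) = aswap k hk by group, invLen_aswap, hlen]

lemma exists_adj_descent {n : ℕ} {w : SymGrp n} (h : w ≠ 1) :
    ∃ (k : ℕ) (hk : k + 1 < n), w⁻¹ ⟨k+1, hk⟩ < w⁻¹ ⟨k, Nat.lt_of_succ_lt hk⟩ := by
  by_contra hc
  push_neg at hc
  have : StrictMono ⇑(w⁻¹) := by
    apply strictMono_of_adj
    intro k hk
    have h1 := hc k hk
    have hne : w⁻¹ ⟨k, Nat.lt_of_succ_lt hk⟩ ≠ w⁻¹ ⟨k+1, hk⟩ := by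
      intro hcon
      have := w⁻¹.injective hcon
      simp [Fin.ext_iff] at this
    exact lt_of_le_of_ne h1 hne
  have := perm_strictMono_eq_one this
  exact h (by simpa using congrArg (·⁻¹) this)

lemma descent_step {n : ℕ} {u v : SymGrp n} (h : wleR u v) (hne : u ≠ v) :
    ∃ (k : ℕ) (hk : k + 1 < n),
      stepR u (u * aswap k hk) ∧ wleR (u * aswap k hk) v ∧
        invLen (u⁻¹ * v) = invLen ((u * aswap k hk)⁻¹ * v) + 1 := by
  set w := u⁻¹ * v with hw
  have hw1 : w ≠ 1 := by
    intro hc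
    apply hne
    have : u * w = v := by rw [hw]; group
    rw [hc, mul_one] at this
    exact this
  obtain ⟨k, hk, hdesc⟩ := exists_adj_descent hw1
  set s := aswap k hk with hs
  have hwlen : invLen w = invLen (w⁻¹ * s)⁻¹ + 1 := by
    have := invLen_mul_aswap_of_gt (u := w⁻¹) (k := k) (h := hk) hdesc
    rw [invLen_inv, ← this, invLen_inv]
  have hsw : (w⁻¹ * s)⁻¹ = s * w := by rw [hs, mul_inv_rev, aswap_inv]; group
  rw [hsw] at hwlen
  have hswv : s * w = (u * s)⁻¹ * v := by rw [hw, hs, mul_inv_rev, aswap_inv]; group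
  -- length of u * s must go up
  rcases lt_or_ge (u ⟨k, Nat.lt_of_succ_lt hk⟩) (u ⟨k+1, hk⟩) with hcase | hcase
  · have hup : invLen (u * s) = invLen u + 1 := invLen_mul_aswap_of_lt hcase
    refine ⟨k, hk, ⟨k, hk, rfl, hup⟩, ?_, ?_⟩
    · unfold wleR at h ⊢
      rw [← hswv, hup]
      rw [← hw] at h
      omega
    · show invLen w = invLen ((u * s)⁻¹ * v) + 1
      rw [← hswv]
      exact hwlen
  · exfalso
    have hne2 : u ⟨k+1, hk⟩ ≠ u ⟨k, Nat.lt_of_succ_lt hk⟩ := by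
      intro hcon
      have := u.injective hcon
      simp [Fin.ext_iff] at this
    have hdown : invLen u = invLen (u * s) + 1 :=
      invLen_mul_aswap_of_gt (lt_of_le_of_ne hcase hne2)
    have hsub : invLen v ≤ invLen (u * s) + invLen (s * w) := by
      have := invLen_mul_le (u * s) (s * w)
      rwa [show (u * s) * (s * w) = u * w by rw [hs, mul_assoc, ← mul_assoc (aswap k hk),
        aswap, Equiv.swap_mul_self, one_mul], show u * w = v by rw [hw]; group] at this
    unfold wleR at h
    rw [← hw] at h
    omega

lemma wleR_rtg {n : ℕ} {u v : SymGrp n} (h : wleR u v) :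
    Relation.ReflTransGen (stepR (n := n)) u v := by
  obtain ⟨m, hm⟩ : ∃ m, invLen (u⁻¹ * v) ≤ m := ⟨_, le_refl _⟩
  induction m generalizing u with
  | zero =>
    have h0 : invLen (u⁻¹ * v) = 0 := by omega
    have : u⁻¹ * v = 1 := invLen_eq_zero.mp h0
    have : v = u := by
      have : u * (u⁻¹ * v) = u * 1 := by rw [this]
      simpa [← mul_assoc] using this
    rw [this]
  | succ m ih =>
    rcases eq_or_ne u v with rfl | hne
    · exact Relation.ReflTransGen.refl
    · obtain ⟨k, hk, hstep, hle, hlen⟩ := descent_step h hne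
      exact Relation.ReflTransGen.head hstep (ih hle (by omega))

lemma rtg_wleR {n : ℕ} {u v : SymGrp n} (h : Relation.ReflTransGen (stepR (n := n)) u v) :
    wleR u v := by
  induction h with
  | refl => exact wleR_refl u
  | tail _ hstep ih => exact wleR_trans ih (stepR_wleR hstep)

/-- `stepR` is precisely the cover relation of the weak order. -/
lemma stepR_iff_cover {n : ℕ} {u v : SymGrp n} :
    stepR u v ↔ (wleR u v ∧ u ≠ v ∧ ∀ z, wleR u z → wleR z v → z = u ∨ z = v) := by
  constructor
  · intro h
    obtain ⟨k, hk, hv, hlen⟩ := h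
    refine ⟨stepR_wleR ⟨k, hk, hv, hlen⟩, ?_, ?_⟩
    · intro hc; rw [← hc] at hlen; omega
    · intro z h1 h2
      have e1 := h1
      have e2 := h2
      unfold wleR at e1 e2
      rcases Nat.lt_or_ge (invLen z) (invLen v) with hlt | hge
      · left
        have : invLen (u⁻¹ * z) = 0 := by omega
        exact (inv_mul_eq_one.mp (invLen_eq_zero.mp this)).symm
      · right
        have : invLen (z⁻¹ * v) = 0 := by omega
        exact inv_mul_eq_one.mp (invLen_eq_zero.mp this)
  · rintro ⟨h1, h2, h3⟩
    obtain ⟨k, hk, hstep, hle, _⟩ := descent_step h1 h2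
    rcases h3 (u * aswap k hk) (stepR_wleR hstep) hle with hc | hc
    · exfalso
      obtain ⟨_, _, _, hlen⟩ := hstep
      rw [hc] at hlen
      omega
    · rw [← hc]
      exact hstep

end Skel

namespace Skel

lemma pvec_inj {n : ℕ} : Function.Injective (pvec (n := n)) := by
  intro u v h
  have : u⁻¹ = v⁻¹ := by
    ext i
    have := congrFun h i
    simp only [pvec, add_left_inj, Nat.cast_inj] at this
    exact this
  simpa using congrArg (·⁻¹) this

/-- The vertex set of the permutahedron as a finset. -/
noncomputable def V (n : ℕ) : Finset (Fin n → ℝ) :=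
  Finset.univ.image (pvec (n := n))

lemma permPoly'_eq (n : ℕ) : PermPoly n = convexHull ℝ ↑(V n) := by
  unfold PermPoly V
  congr 1
  ext x
  simp [eq_comm]

lemma V_nonempty (n : ℕ) : (V n).Nonempty := ⟨pvec 1, by simp [V]⟩

lemma mem_V {n : ℕ} {x : Fin n → ℝ} : x ∈ V n ↔ ∃ z : SymGrp n, x = pvec z := by
  simp [V, eq_comm]

/-- The exposed face of a polytope determined by `l` is the hull of the
maximizing vertices. -/
lemma face_eq {n : ℕ} (V : Finset (Fin n → ℝ)) (hV : V.Nonempty)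
    (l : (Fin n → ℝ) →L[ℝ] ℝ) :
    {x ∈ convexHull ℝ (V : Set (Fin n → ℝ)) |
        ∀ y ∈ convexHull ℝ (V : Set (Fin n → ℝ)), l y ≤ l x}
      = convexHull ℝ ((V.filter (fun s => ∀ y ∈ V, l y ≤ l s) : Finset (Fin n → ℝ)) :
          Set (Fin n → ℝ)) := by
  classical
  set M := V.sup' hV l with hM
  have hlinear : IsLinearMap ℝ ⇑l := ⟨l.map_add, l.map_smul⟩
  have hle : ∀ y ∈ V, l y ≤ M := fun y hy => Finset.le_sup' l hy
  have hhull_le : ∀ y ∈ convexHull ℝ (V : Set (Fin n → ℝ)), l y ≤ M := by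
    intro y hy
    have : convexHull ℝ (V : Set (Fin n → ℝ)) ⊆ {z | l z ≤ M} :=
      convexHull_min (fun z hz => hle z hz) (convex_halfSpace_le hlinear M)
    exact this hy
  obtain ⟨s₀, hs₀V, hs₀⟩ := Finset.exists_mem_eq_sup' hV l
  set W := V.filter (fun s => ∀ y ∈ V, l y ≤ l s) with hW
  have hWmem : ∀ s, s ∈ W ↔ s ∈ V ∧ l s = M := by
    intro s
    rw [hW, Finset.mem_filter]
    constructor
    · rintro ⟨h1, h2⟩
      exact ⟨h1, le_antisymm (hle s h1) (by rw [hM, hs₀]; exact h2 s₀ hs₀V)⟩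
    · rintro ⟨h1, h2⟩
      exact ⟨h1, fun y hy => (hle y hy).trans h2.ge⟩
  apply Set.eq_of_subset_of_subset
  · rintro x ⟨hx1, hx2⟩
    have hxM : l x = M := by
      refine le_antisymm (hhull_le x hx1) ?_
      have := hx2 s₀ (subset_convexHull ℝ _ hs₀V)
      exact hs₀.trans_le this
    rw [Finset.convexHull_eq] at hx1
    obtain ⟨w, hw0, hw1, hwx⟩ := hx1
    have hxsum : x = ∑ y ∈ V, w y • y := by
      rw [← hwx, Finset.centerMass_eq_of_sum_1 _ _ hw1]
      rfl
    have hlx : l x = ∑ y ∈ V, w y * l y := by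
      rw [hxsum, map_sum]
      simp [l.map_smul]
    have hkey : ∀ y ∈ V, w y ≠ 0 → l y = M := by
      by_contra hc
      push_neg at hc
      obtain ⟨y₀, hy₀V, hy₀w, hy₀l⟩ := hc
      have hy₀lt : l y₀ < M := lt_of_le_of_ne (hle _ hy₀V) hy₀l
      have hy₀pos : 0 < w y₀ := lt_of_le_of_ne (hw0 _ hy₀V) (Ne.symm hy₀w)
      have : ∑ y ∈ V, w y * l y < ∑ y ∈ V, w y * M := by
        refine Finset.sum_lt_sum (fun i hi => mul_le_mul_of_nonneg_left (hle i hi) (hw0 i hi))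
          ⟨y₀, hy₀V, ?_⟩
        exact mul_lt_mul_of_pos_left hy₀lt hy₀pos
      rw [← Finset.sum_mul, hw1, one_mul, ← hlx, hxM] at this
      exact lt_irrefl _ this
    have hsub : V.filter (fun y => w y ≠ 0) ⊆ W := by
      intro y hy
      rw [Finset.mem_filter] at hy
      exact (hWmem y).mpr ⟨hy.1, hkey y hy.1 hy.2⟩
    have hx' : x = (V.filter (fun y => w y ≠ 0)).centerMass w id := by
      rw [Finset.centerMass_filter_ne_zero, hwx]
    rw [hx']
    refine Finset.centerMass_mem_convexHull _ (fun i hi => hw0 i (Finset.mem_filter.mp hi).1)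
      ?_ (fun i hi => hsub hi)
    rw [Finset.sum_filter_ne_zero, hw1]
    norm_num
  · intro x hx
    have hWsub : (W : Set (Fin n → ℝ)) ⊆ (V : Set (Fin n → ℝ)) := by
      intro y hy
      exact Finset.mem_coe.mpr ((hWmem y).mp (Finset.mem_coe.mp hy)).1
    have hx1 : x ∈ convexHull ℝ (V : Set (Fin n → ℝ)) :=
      convexHull_mono hWsub hx
    have hxM : l x = M := by
      have : convexHull ℝ (W : Set (Fin n → ℝ)) ⊆ {z | l z = M} := by
        refine convexHull_min ?_ (convex_hyperplane hlinear M)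
        intro z hz
        exact ((hWmem z).mp (Finset.mem_coe.mp hz)).2
      exact this hx
    exact ⟨hx1, fun y hy => (hhull_le y hy).trans_eq hxM.symm⟩

/-- If a finite set is contained in a segment and `x` (an endpoint) lies in its
hull, then `x` belongs to the set. -/
lemma endpoint_mem {n : ℕ} {x y : Fin n → ℝ} (hxy : x ≠ y) (T : Finset (Fin n → ℝ))
    (hT : (T : Set (Fin n → ℝ)) ⊆ segment ℝ x y)
    (hx : x ∈ convexHull ℝ (T : Set (Fin n → ℝ))) : x ∈ T := by
  classical
  rw [Finset.convexHull_eq] at hx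
  obtain ⟨w, hw0, hw1, hwx⟩ := hx
  have hseg : ∀ t ∈ T, ∃ a b : ℝ, 0 ≤ a ∧ 0 ≤ b ∧ a + b = 1 ∧ a • x + b • y = t :=
    fun t ht => hT (Finset.mem_coe.mpr ht)
  choose! a b ha hb hab heq using hseg
  have hxsum : x = ∑ t ∈ T, w t • t := by
    rw [← hwx, Finset.centerMass_eq_of_sum_1 _ _ hw1]; rfl
  have hxsum2 : x = (∑ t ∈ T, w t * a t) • x + (∑ t ∈ T, w t * b t) • y := by
    calc x = ∑ t ∈ T, w t • t := hxsum
    _ = ∑ t ∈ T, (w t • (a t • x + b t • y)) := by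
        refine Finset.sum_congr rfl (fun t ht => ?_)
        rw [heq t ht]
    _ = ∑ t ∈ T, ((w t * a t) • x + (w t * b t) • y) := by
        refine Finset.sum_congr rfl (fun t ht => ?_)
        rw [smul_add, smul_smul, smul_smul]
    _ = (∑ t ∈ T, w t * a t) • x + (∑ t ∈ T, w t * b t) • y := by
        rw [Finset.sum_add_distrib, Finset.sum_smul, Finset.sum_smul]
  set A := ∑ t ∈ T, w t * a t with hA
  set B := ∑ t ∈ T, w t * b t with hB
  have hAB : A + B = 1 := by
    rw [hA, hB, ← Finset.sum_add_distrib]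
    rw [← hw1]
    refine Finset.sum_congr rfl (fun t ht => ?_)
    rw [← mul_add, hab t ht, mul_one]
  have hBzero : B = 0 := by
    by_contra hBne
    apply hxy
    have h1 : (1 - A) • x = B • y := by
      have := hxsum2
      have h2 : x - A • x = B • y := by
        rw [eq_sub_iff_add_eq.mpr this.symm]; abel
      rw [sub_smul, one_smul]
      exact h2
    have h2 : B • x = B • y := by
      rw [← h1]
      congr 1
      linarith
    exact smul_right_injective _ hBne h2
  have hall : ∀ t ∈ T, w t * b t = 0 := by
    rw [← Finset.sum_eq_zero_iff_of_nonneg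
      (fun t ht => mul_nonneg (hw0 t ht) (hb t ht))]
    exact hBzero
  obtain ⟨t₀, ht₀T, ht₀w⟩ : ∃ t ∈ T, w t ≠ 0 := by
    apply Finset.exists_ne_zero_of_sum_ne_zero
    rw [hw1]; norm_num
  have hbt₀ : b t₀ = 0 := by
    have := hall t₀ ht₀T
    rcases mul_eq_zero.mp this with h | h
    · exact absurd h ht₀w
    · exact h
  have hat₀ : a t₀ = 1 := by
    have := hab t₀ ht₀T
    rw [hbt₀] at this
    linarith
  have : t₀ = x := by
    rw [← heq t₀ ht₀T, hat₀, hbt₀]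
    simp
  rw [← this]
  exact ht₀T

lemma pvec_sq_sum {n : ℕ} (z : SymGrp n) :
    ∑ i, (pvec z i)^2 = ∑ i : Fin n, (((i:ℕ):ℝ) + 1)^2 := by
  exact Fintype.sum_equiv z⁻¹ _ _ (fun i => rfl)

/-- A vertex of the permutahedron on a segment between two vertices is an
endpoint. -/
lemma pvec_mem_segment {n : ℕ} {u v w : SymGrp n}
    (h : pvec w ∈ segment ℝ (pvec u) (pvec v)) : w = u ∨ w = v := by
  obtain ⟨A, B, hA, hB, hAB, heq⟩ := h
  rcases eq_or_ne (pvec u) (pvec v) with hc | hc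
  · left
    apply pvec_inj
    rw [← heq, ← hc, ← add_smul, hAB, one_smul]
  rcases eq_or_lt_of_le hA with hA0 | hApos
  · right
    apply pvec_inj
    rw [← heq, ← hA0, zero_smul, zero_add]
    have : B = 1 := by linarith
    rw [this, one_smul]
  rcases eq_or_lt_of_le hB with hB0 | hBpos
  · left
    apply pvec_inj
    rw [← heq, ← hB0, zero_smul, add_zero]
    have : A = 1 := by linarith
    rw [this, one_smul]
  exfalso
  set x := pvec u
  set y := pvec v
  set N := ∑ i : Fin n, (((i:ℕ):ℝ) + 1)^2 with hN
  have hQx : ∑ i, (x i)^2 = N := pvec_sq_sum u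
  have hQy : ∑ i, (y i)^2 = N := pvec_sq_sum v
  have hQw : ∑ i, (pvec w i)^2 = N := pvec_sq_sum w
  have hxyN : ∑ i, x i * y i < N := by
    have hpos : 0 < ∑ i, (x i - y i)^2 := by
      have hne : ∃ i, x i ≠ y i := by
        by_contra hcon
        push_neg at hcon
        exact hc (funext hcon)
      obtain ⟨i₀, hi₀⟩ := hne
      refine Finset.sum_pos' (fun i _ => sq_nonneg _) ⟨i₀, Finset.mem_univ _, ?_⟩
      have hsub : x i₀ - y i₀ ≠ 0 := sub_ne_zero.mpr hi₀
      positivity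
    have hexp : ∑ i, (x i - y i)^2
        = (∑ i, (x i)^2) - 2 * (∑ i, x i * y i) + ∑ i, (y i)^2 := by
      rw [Finset.mul_sum, ← Finset.sum_sub_distrib, ← Finset.sum_add_distrib]
      exact Finset.sum_congr rfl (fun i _ => by ring)
    rw [hexp, hQx, hQy] at hpos
    linarith
  have hQcomb : ∑ i, (pvec w i)^2
      = A^2 * (∑ i, (x i)^2) + 2*A*B*(∑ i, x i * y i) + B^2 * (∑ i, (y i)^2) := by
    rw [Finset.mul_sum, Finset.mul_sum, Finset.mul_sum, ← Finset.sum_add_distrib,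
      ← Finset.sum_add_distrib]
    refine Finset.sum_congr rfl (fun i _ => ?_)
    have : pvec w i = A * x i + B * y i := by
      rw [← heq]; simp [Pi.add_apply]
    rw [this]; ring
  rw [hQw, hQx, hQy] at hQcomb
  have hab2 : (0:ℝ) < 2*A*B := by positivity
  have h4 : A^2 + 2*A*B + B^2 = 1 := by linear_combination (A + B + 1) * hAB
  have h5 : 2*A*B*(N - ∑ i, x i * y i) = 0 := by linear_combination N * h4 + hQcomb
  rcases mul_eq_zero.mp h5 with h | h
  · exact absurd h (ne_of_gt hab2)
  · have : N = ∑ i, x i * y i := by linarith [sub_eq_zero.mp h]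
    linarith

end Skel

namespace Skel

/-- Weight function: identity except that the value at `k+1` is lowered to `k`,
creating a tie between positions `k` and `k+1`. -/
def gn (k : ℕ) {n : ℕ} (m : Fin n) : ℕ := if (m:ℕ) = k+1 then k else (m:ℕ)

def gfun (k : ℕ) {n : ℕ} (m : Fin n) : ℝ := (gn k m : ℝ)

lemma gn_mono {n : ℕ} {k : ℕ} {i j : Fin n} (h : (i:ℕ) ≤ (j:ℕ)) : gn k i ≤ gn k j := by
  unfold gn; split_ifs <;> omega

lemma gn_lt {n : ℕ} {k : ℕ} {i j : Fin n} (h : (i:ℕ) < (j:ℕ))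
    (hne : ¬((i:ℕ) = k ∧ (j:ℕ) = k+1)) : gn k i < gn k j := by
  unfold gn; split_ifs <;> omega

lemma gn_comp_aswap {n : ℕ} {k : ℕ} (hk : k + 1 < n) (x : Fin n) :
    gn k (aswap k hk x) = gn k x := by
  have h := aswap_coe k hk x
  unfold gn
  simp only [h]
  split_ifs <;> omega

lemma monovary_iff {n : ℕ} {k : ℕ} (hk : k + 1 < n) (σ : SymGrp n) :
    MonovaryOn (gfun k) ((fun j : Fin n => ((j:ℕ):ℝ) + 1) ∘ ⇑σ) Set.univ
      ↔ σ = 1 ∨ σ = aswap k hk := by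
  constructor
  · intro h
    have hstar : ∀ i j : Fin n, gn k i < gn k j → σ i < σ j := by
      intro i j hij
      have hne : i ≠ j := by rintro rfl; omega
      have hσne : σ i ≠ σ j := fun hc => hne (σ.injective hc)
      by_contra hc
      have hlt : σ j < σ i := lt_of_le_of_ne (not_lt.mp hc) (Ne.symm hσne)
      have hlt' : ((fun j : Fin n => ((j:ℕ):ℝ) + 1) ∘ ⇑σ) j
          < ((fun j : Fin n => ((j:ℕ):ℝ) + 1) ∘ ⇑σ) i := by
        simp only [Function.comp_apply, add_lt_add_iff_right, Nat.cast_lt]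
        exact hlt
      have := h (Set.mem_univ j) (Set.mem_univ i) hlt'
      rw [gfun, gfun, Nat.cast_le] at this
      omega
    set k0 : Fin n := ⟨k, Nat.lt_of_succ_lt hk⟩ with hk0
    set k1 : Fin n := ⟨k+1, hk⟩ with hk1
    have hk01 : k0 ≠ k1 := by simp [hk0, hk1, Fin.ext_iff]
    rcases lt_or_ge (σ k0) (σ k1) with hcase | hcase
    · left
      apply perm_strictMono_eq_one
      intro i j hij
      by_cases hc : i = k0 ∧ j = k1
      · rw [hc.1, hc.2]; exact hcase
      · refine hstar i j (gn_lt hij ?_)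
        intro ⟨h1, h2⟩
        exact hc ⟨Fin.ext h1, Fin.ext h2⟩
    · right
      have hσne : σ k1 ≠ σ k0 := fun hc => hk01 (σ.injective hc).symm
      have hcase' : σ k1 < σ k0 := lt_of_le_of_ne hcase hσne
      have hτ : StrictMono ⇑(σ * aswap k hk) := by
        intro i j hij
        simp only [Equiv.Perm.mul_apply]
        by_cases hc : i = k0 ∧ j = k1
        · rw [hc.1, hc.2, hk0, hk1, aswap_left, aswap_right]
          exact hcase'
        · have hg : gn k i < gn k j := by
            refine gn_lt hij ?_
            intro ⟨h1, h2⟩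
            exact hc ⟨Fin.ext h1, Fin.ext h2⟩
          refine hstar _ _ ?_
          rw [gn_comp_aswap hk, gn_comp_aswap hk]
          exact hg
      have h1 : σ * aswap k hk = 1 := perm_strictMono_eq_one hτ
      have h2 : σ = (aswap k hk)⁻¹ := eq_inv_of_mul_eq_one_left h1
      rw [h2, aswap_inv]
  · rintro (rfl | rfl)
    · intro i _ j _ hlt
      simp only [Function.comp_apply, Equiv.Perm.one_apply, add_lt_add_iff_right,
        Nat.cast_lt] at hlt
      rw [gfun, gfun, Nat.cast_le]
      exact gn_mono hlt.le
    · intro i _ j _ hlt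
      simp only [Function.comp_apply, add_lt_add_iff_right, Nat.cast_lt] at hlt
      rw [gfun, gfun, Nat.cast_le]
      rw [← gn_comp_aswap hk i, ← gn_comp_aswap hk j]
      exact gn_mono hlt.le

end Skel

namespace Skel

lemma core_max {n : ℕ} {k : ℕ} (hk : k + 1 < n) (σ : SymGrp n) :
    (∑ j, gfun k j * (((σ j : ℕ):ℝ) + 1)) ≤ (∑ j : Fin n, gfun k j * (((j:ℕ):ℝ) + 1)) ∧
      ((∑ j, gfun k j * (((σ j : ℕ):ℝ) + 1)) = (∑ j : Fin n, gfun k j * (((j:ℕ):ℝ) + 1))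
        ↔ σ = 1 ∨ σ = aswap k hk) := by
  have hmono : MonovaryOn (gfun k) (fun j : Fin n => ((j:ℕ):ℝ) + 1)
      (↑(Finset.univ : Finset (Fin n))) := by
    intro i _ j _ hlt
    simp only [add_lt_add_iff_right, Nat.cast_lt] at hlt
    rw [gfun, gfun, Nat.cast_le]
    exact gn_mono hlt.le
  have hsub : {x | σ x ≠ x} ⊆ (↑(Finset.univ : Finset (Fin n)) : Set (Fin n)) := by
    simp
  have h1 := hmono.sum_smul_comp_perm_le_sum_smul hsub
  have h2 := hmono.sum_smul_comp_perm_eq_sum_smul_iff hsub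
  constructor
  · simpa only [smul_eq_mul] using h1
  · have h3 := monovary_iff hk σ
    constructor
    · intro heq
      apply h3.mp
      rw [← Finset.coe_univ]
      exact h2.mp (by simpa only [smul_eq_mul] using heq)
    · intro hor
      have := h2.mpr (by rw [Finset.coe_univ]; exact h3.mpr hor)
      simpa only [smul_eq_mul] using this

end Skel

namespace Skel

/-- The linear functional with coefficient vector `c`. -/
noncomputable def lfun {n : ℕ} (c : Fin n → ℝ) : (Fin n → ℝ) →L[ℝ] ℝ :=
  ∑ i, c i • (ContinuousLinearMap.proj i : (Fin n → ℝ) →L[ℝ] ℝ)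

lemma lfun_apply {n : ℕ} (c x : Fin n → ℝ) : lfun c x = ∑ i, c i * x i := by
  simp [lfun, ContinuousLinearMap.sum_apply]

/-- The coefficient vector exposing the edge from `u` to `u * s_k`. -/
noncomputable def cvec {n : ℕ} (u : SymGrp n) (k : ℕ) : Fin n → ℝ :=
  fun i => gfun k (u⁻¹ i)

lemma lmax {n : ℕ} (u : SymGrp n) (k : ℕ) (hk : k + 1 < n) (w : SymGrp n) :
    lfun (cvec u k) (pvec w) ≤ lfun (cvec u k) (pvec u) ∧
      (lfun (cvec u k) (pvec w) = lfun (cvec u k) (pvec u)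
        ↔ w = u ∨ w = u * aswap k hk) := by
  have hre : ∀ z : SymGrp n, lfun (cvec u k) (pvec z)
      = ∑ j, gfun k j * ((((z⁻¹ * u) j : Fin n) : ℕ) + 1 : ℝ) := by
    intro z
    rw [lfun_apply]
    refine (Fintype.sum_equiv u _ _ (fun j => ?_)).symm
    simp [cvec, pvec, Equiv.Perm.mul_apply]
  have hu : lfun (cvec u k) (pvec u) = ∑ j : Fin n, gfun k j * (((j:ℕ):ℝ) + 1) := by
    rw [hre u]
    refine Finset.sum_congr rfl (fun j _ => ?_)
    simp
  have hcore := core_max hk (w⁻¹ * u)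
  have hiff : (w⁻¹ * u = 1 ∨ w⁻¹ * u = aswap k hk) ↔ (w = u ∨ w = u * aswap k hk) := by
    constructor
    · rintro (h | h)
      · left; exact (inv_mul_eq_one.mp h)
      · right
        have : u = w * aswap k hk := (inv_mul_eq_iff_eq_mul.mp h)
        rw [this, mul_assoc, aswap, Equiv.swap_mul_self, mul_one]
    · rintro (rfl | rfl)
      · left; simp
      · right
        rw [mul_inv_rev, aswap_inv]
        group
  rw [hre w, hu]
  exact ⟨hcore.1, hcore.2.trans hiff⟩

end Skel

namespace Skel

lemma pvec_ne_aswap {n : ℕ} (u : SymGrp n) (k : ℕ) (hk : k + 1 < n) :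
    pvec u ≠ pvec (u * aswap k hk) := by
  intro hc
  have := pvec_inj hc
  have : aswap k hk = 1 := by
    have h2 := congrArg (fun z => u⁻¹ * z) this
    simpa using h2.symm
  exact aswap_ne_one k hk this

lemma maximizer_filter {n : ℕ} (u : SymGrp n) (k : ℕ) (hk : k + 1 < n) :
    ((V n).filter (fun s => ∀ y ∈ V n, lfun (cvec u k) y ≤ lfun (cvec u k) s) :
        Set (Fin n → ℝ))
      = {pvec u, pvec (u * aswap k hk)} := by
  ext x
  simp only [Finset.coe_filter, Set.mem_setOf_eq, Set.mem_insert_iff, Set.mem_singleton_iff]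
  constructor
  · rintro ⟨hxV, hmax⟩
    obtain ⟨z, rfl⟩ := mem_V.mp hxV
    have h1 : lfun (cvec u k) (pvec z) = lfun (cvec u k) (pvec u) := by
      refine le_antisymm ((lmax u k hk z).1) ?_
      exact hmax (pvec u) (mem_V.mpr ⟨u, rfl⟩)
    rcases (lmax u k hk z).2.mp h1 with rfl | rfl
    · left; rfl
    · right; rfl
  · rintro (rfl | rfl)
    · refine ⟨mem_V.mpr ⟨u, rfl⟩, ?_⟩
      intro y hy
      obtain ⟨z, rfl⟩ := mem_V.mp hy
      exact (lmax u k hk z).1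
    · refine ⟨mem_V.mpr ⟨u * aswap k hk, rfl⟩, ?_⟩
      intro y hy
      obtain ⟨z, rfl⟩ := mem_V.mp hy
      refine ((lmax u k hk z).1).trans ?_
      exact ((lmax u k hk (u * aswap k hk)).2.mpr (Or.inr rfl)).ge

lemma aswap_isEdge {n : ℕ} (u : SymGrp n) (k : ℕ) (hk : k + 1 < n) :
    pvec u ≠ pvec (u * aswap k hk) ∧
      IsExposed ℝ (PermPoly n) (segment ℝ (pvec u) (pvec (u * aswap k hk))) := by
  refine ⟨pvec_ne_aswap u k hk, ?_⟩
  intro _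
  refine ⟨lfun (cvec u k), ?_⟩
  rw [permPoly'_eq]
  rw [face_eq (V n) (V_nonempty n) (lfun (cvec u k)), maximizer_filter u k hk,
    ← convexHull_pair]

end Skel

namespace Skel

lemma edge_structure {n : ℕ} {x y : Fin n → ℝ}
    (hne : x ≠ y) (hexp : IsExposed ℝ (PermPoly n) (segment ℝ x y)) :
    ∃ (u : SymGrp n) (k : ℕ) (hk : k + 1 < n),
      x = pvec u ∧ y = pvec (u * aswap k hk) := by
  classical
  obtain ⟨l, hseg⟩ := hexp ⟨x, left_mem_segment ℝ x y⟩
  rw [permPoly'_eq, face_eq (V n) (V_nonempty n) l] at hseg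
  set W := (V n).filter (fun s => ∀ y' ∈ V n, l y' ≤ l s) with hW
  have hWseg : (W : Set (Fin n → ℝ)) ⊆ segment ℝ x y := by
    rw [hseg]; exact subset_convexHull ℝ _
  have hxW : x ∈ W :=
    endpoint_mem hne W hWseg (by rw [← hseg]; exact left_mem_segment ℝ x y)
  have hyW : y ∈ W := by
    refine endpoint_mem hne.symm W ?_ (by rw [← hseg]; exact right_mem_segment ℝ x y)
    rw [segment_symm]; exact hWseg
  have hWV : W ⊆ V n := Finset.filter_subset _ _
  obtain ⟨u, hxu⟩ := mem_V.mp (hWV hxW)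
  obtain ⟨v, hyv⟩ := mem_V.mp (hWV hyW)
  have huv : u ≠ v := fun hc => hne (by rw [hxu, hyv, hc])
  have hmaxu : ∀ z : SymGrp n, l (pvec z) ≤ l (pvec u) := by
    have h := (Finset.mem_filter.mp hxW).2
    intro z
    rw [← hxu]
    exact h _ (mem_V.mpr ⟨z, rfl⟩)
  have hmaxv : ∀ z : SymGrp n, l (pvec z) ≤ l (pvec v) := by
    have h := (Finset.mem_filter.mp hyW).2
    intro z
    rw [← hyv]
    exact h _ (mem_V.mpr ⟨z, rfl⟩)
  have honly : ∀ z : SymGrp n, (∀ z' : SymGrp n, l (pvec z') ≤ l (pvec z)) →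
      z = u ∨ z = v := by
    intro z hz
    have hmem : pvec z ∈ W := by
      refine Finset.mem_filter.mpr ⟨mem_V.mpr ⟨z, rfl⟩, ?_⟩
      intro y' hy'
      obtain ⟨z', rfl⟩ := mem_V.mp hy'
      exact hz z'
    have hm2 : pvec z ∈ segment ℝ x y := hWseg hmem
    rw [hxu, hyv] at hm2
    exact pvec_mem_segment hm2
  set c : Fin n → ℝ := fun i => l (fun j => if i = j then 1 else 0) with hc
  have hlc : ∀ p : Fin n → ℝ, l p = ∑ i, c i * p i := by
    intro p
    have h := LinearMap.pi_apply_eq_sum_univ (l : (Fin n → ℝ) →ₗ[ℝ] ℝ) p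
    simpa [hc, smul_eq_mul, mul_comm] using h
  have hswapvec : ∀ (z : SymGrp n) (i j : Fin n), pvec (Equiv.swap i j * z)
      = fun p => pvec z (Equiv.swap i j p) := by
    intro z i j
    funext p
    simp [pvec, mul_inv_rev, Equiv.swap_inv, Equiv.Perm.mul_apply]
  -- strict monovariance of maximizers
  have hbeta : ∀ z : SymGrp n, (∀ z' : SymGrp n, l (pvec z') ≤ l (pvec z)) →
      ∀ i j : Fin n, c i < c j → pvec z i < pvec z j := by
    intro z hz i j hcij
    have hij : i ≠ j := by rintro rfl; exact lt_irrefl _ hcij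
    by_contra hle
    have hne2 : pvec z i ≠ pvec z j := by
      simp only [pvec, Ne, add_left_inj, Nat.cast_inj]
      intro hc2
      exact hij (by
        have := z⁻¹.injective (Fin.ext hc2)
        exact this)
    have hzij : pvec z j < pvec z i := lt_of_le_of_ne (not_lt.mp hle) (Ne.symm hne2)
    have hgain : l (pvec (Equiv.swap i j * z)) - l (pvec z)
        = (c j - c i) * (pvec z i - pvec z j) := by
      rw [hswapvec, hlc, hlc, ← Finset.sum_sub_distrib]
      rw [show (∑ p, (c p * pvec z (Equiv.swap i j p) - c p * pvec z p))
          = ∑ p ∈ ({i, j} : Finset (Fin n)),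
              (c p * pvec z (Equiv.swap i j p) - c p * pvec z p) by
        symm
        apply Finset.sum_subset (Finset.subset_univ _)
        intro p _ hp
        simp only [Finset.mem_insert, Finset.mem_singleton] at hp
        push_neg at hp
        rw [Equiv.swap_apply_of_ne_of_ne hp.1 hp.2]
        ring]
      rw [Finset.sum_pair hij, Equiv.swap_apply_left, Equiv.swap_apply_right]
      ring
    have hpos : 0 < l (pvec (Equiv.swap i j * z)) - l (pvec z) := by
      rw [hgain]
      apply mul_pos (by linarith) (by linarith)
    have := hz (Equiv.swap i j * z)
    linarith
  -- a tied pair sends `u` to `v` by swapping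
  have halpha : ∀ i j : Fin n, i ≠ j → c i = c j → Equiv.swap i j * u = v := by
    intro i j hij hcij
    have hcswap : ∀ p, c (Equiv.swap i j p) = c p := by
      intro p
      rcases eq_or_ne p i with rfl | hpi
      · rw [Equiv.swap_apply_left]; exact hcij.symm
      rcases eq_or_ne p j with rfl | hpj
      · rw [Equiv.swap_apply_right]; exact hcij
      · rw [Equiv.swap_apply_of_ne_of_ne hpi hpj]
    have hval : l (pvec (Equiv.swap i j * u)) = l (pvec u) := by
      rw [hswapvec, hlc, hlc]
      exact Fintype.sum_equiv (Equiv.swap i j) _ _ (fun p => by rw [hcswap p])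
    have hmax' : ∀ z', l (pvec z') ≤ l (pvec (Equiv.swap i j * u)) := by
      rw [hval]; exact hmaxu
    rcases honly _ hmax' with hcu | hcv
    · exfalso
      have h1 : Equiv.swap i j = 1 := by
        have : Equiv.swap i j * u = 1 * u := by rw [one_mul]; exact hcu
        exact mul_right_cancel this
      exact hij (Equiv.swap_eq_one_iff.mp h1)
    · exact hcv
  -- existence of a tied pair
  have htie : ∃ i j : Fin n, i ≠ j ∧ c i = c j := by
    by_contra hcon
    push_neg at hcon
    apply huv
    have hmono : StrictMono ⇑(v⁻¹ * u) := by
      intro a b hab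
      have h1 : u a ≠ u b := fun hc2 => (ne_of_lt hab) (u.injective hc2)
      have h2 : c (u a) ≠ c (u b) := hcon _ _ h1
      have h3 : c (u a) < c (u b) := by
        rcases lt_or_gt_of_ne h2 with hlt | hgt
        · exact hlt
        · exfalso
          have hb := hbeta u hmaxu _ _ hgt
          simp only [pvec, add_lt_add_iff_right, Nat.cast_lt,
            Equiv.Perm.inv_apply_self] at hb
          exact absurd hab (not_lt.mpr hb.le)
      have hb := hbeta v hmaxv _ _ h3
      simp only [pvec, add_lt_add_iff_right, Nat.cast_lt] at hb
      simpa [Equiv.Perm.mul_apply] using hb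
    have h4 := perm_strictMono_eq_one hmono
    exact (inv_mul_eq_one.mp h4).symm
  obtain ⟨i0, j0, hij0, hcij0⟩ := htie
  have hvu0 : Equiv.swap i0 j0 * u = v := halpha i0 j0 hij0 hcij0
  -- the two swapped values are consecutive
  have main : ∀ i j : Fin n, i ≠ j → c i = c j → Equiv.swap i j * u = v →
      ((u⁻¹ i : Fin n) : ℕ) < ((u⁻¹ j : Fin n) : ℕ) →
      ∃ (k : ℕ) (hk : k + 1 < n), v = u * aswap k hk := by
    intro i j hij hcij hvu hlt
    set k := ((u⁻¹ i : Fin n) : ℕ) with hkdef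
    have hk1n : ((u⁻¹ j : Fin n) : ℕ) < n := (u⁻¹ j).isLt
    have hconsec : ((u⁻¹ j : Fin n) : ℕ) = k + 1 := by
      by_contra hcon
      have hgap : k + 1 < ((u⁻¹ j : Fin n) : ℕ) := by omega
      set m : Fin n := ⟨k + 1, by omega⟩ with hm
      set p := u m with hp
      have hump : u⁻¹ p = m := by rw [hp, Equiv.Perm.inv_apply_self]
      have hpi : p ≠ i := by
        intro hc2
        rw [hc2] at hump
        have : ((u⁻¹ i : Fin n) : ℕ) = k + 1 := by rw [hump]
        omega
      have hpj : p ≠ j := by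
        intro hc2
        rw [hc2] at hump
        have : ((u⁻¹ j : Fin n) : ℕ) = k + 1 := by rw [hump]
        omega
      rcases lt_trichotomy (c p) (c i) with hlt2 | heq2 | hgt2
      · have hb := hbeta u hmaxu p i hlt2
        simp only [pvec, add_lt_add_iff_right, Nat.cast_lt, hump] at hb
        have hmv : (m : ℕ) = k + 1 := rfl
        omega
      · have h5 : Equiv.swap p i * u = v := halpha p i hpi heq2
        have h6 : Equiv.swap p i = Equiv.swap i j := mul_right_cancel (h5.trans hvu.symm)
        have h7 := congrFun (congrArg (fun (e : SymGrp n) => ⇑e) h6) j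
        simp only [Equiv.swap_apply_right] at h7
        rw [Equiv.swap_apply_of_ne_of_ne (Ne.symm hpj) (Ne.symm hij)] at h7
        exact hij h7.symm
      · have hcj : c j < c p := by rw [← hcij]; exact hgt2
        have hb := hbeta u hmaxu j p hcj
        simp only [pvec, add_lt_add_iff_right, Nat.cast_lt, hump] at hb
        have hmv : (m : ℕ) = k + 1 := rfl
        omega
    have hk2 : k + 1 < n := by omega
    refine ⟨k, hk2, ?_⟩
    rw [← hvu]
    have hui : u⁻¹ i = ⟨k, Nat.lt_of_succ_lt hk2⟩ := Fin.ext rfl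
    have huj : u⁻¹ j = ⟨k + 1, hk2⟩ := Fin.ext hconsec
    refine Equiv.ext (fun q => ?_)
    show Equiv.swap i j (u q) = u (aswap k hk2 q)
    rcases eq_or_ne q (u⁻¹ i) with rfl | hq1
    · rw [Equiv.Perm.apply_inv_self, Equiv.swap_apply_left, hui, aswap_left, ← huj,
        Equiv.Perm.apply_inv_self]
    rcases eq_or_ne q (u⁻¹ j) with rfl | hq2
    · rw [Equiv.Perm.apply_inv_self, Equiv.swap_apply_right, huj, aswap_right, ← hui,
        Equiv.Perm.apply_inv_self]
    · have huq1 : u q ≠ i := by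
        intro hc2
        exact hq1 (by rw [← hc2, Equiv.Perm.inv_apply_self])
      have huq2 : u q ≠ j := by
        intro hc2
        exact hq2 (by rw [← hc2, Equiv.Perm.inv_apply_self])
      rw [Equiv.swap_apply_of_ne_of_ne huq1 huq2]
      congr 1
      refine (aswap_fix k hk2 ?_ ?_).symm
      · intro hc2
        exact hq1 (Fin.ext (by rw [hui]; exact hc2))
      · intro hc2
        exact hq2 (Fin.ext (by rw [huj]; exact hc2))
  have hii : ((u⁻¹ i0 : Fin n) : ℕ) ≠ ((u⁻¹ j0 : Fin n) : ℕ) := by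
    intro hc2
    exact hij0 (by
      have := u⁻¹.injective (Fin.ext hc2)
      exact this)
  rcases Nat.lt_or_ge ((u⁻¹ i0 : Fin n) : ℕ) ((u⁻¹ j0 : Fin n) : ℕ) with hlt | hge
  · obtain ⟨k, hk, hv⟩ := main i0 j0 hij0 hcij0 hvu0 hlt
    exact ⟨u, k, hk, hxu, by rw [hyv, hv]⟩
  · have hgt : ((u⁻¹ j0 : Fin n) : ℕ) < ((u⁻¹ i0 : Fin n) : ℕ) :=
      lt_of_le_of_ne hge (Ne.symm hii)
    have hvu0' : Equiv.swap j0 i0 * u = v := by rw [Equiv.swap_comm]; exact hvu0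
    obtain ⟨k, hk, hv⟩ := main j0 i0 (Ne.symm hij0) hcij0.symm hvu0' hgt
    exact ⟨u, k, hk, hxu, by rw [hyv, hv]⟩

end Skel

namespace Skel

lemma rho_pvec {n : ℕ} (z : SymGrp n) :
    ∑ i, rho n i * pvec z i
      = ∑ j : Fin n, ((n:ℝ) - ((z j : Fin n):ℕ)) * (((j:ℕ):ℝ) + 1) := by
  refine (Fintype.sum_equiv z _ _ (fun j => ?_)).symm
  simp [rho, pvec, Equiv.Perm.inv_apply_self]

lemma rho_diff {n : ℕ} (u : SymGrp n) (k : ℕ) (hk : k + 1 < n) :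
    (∑ i, rho n i * pvec (u * aswap k hk) i) - (∑ i, rho n i * pvec u i)
      = (((u ⟨k+1, hk⟩ : Fin n):ℕ):ℝ) - (((u ⟨k, Nat.lt_of_succ_lt hk⟩ : Fin n):ℕ):ℝ) := by
  set s := aswap k hk with hs
  have hss : ∀ x : Fin n, s (s x) = x := fun x => by
    rw [hs, aswap]; exact Equiv.swap_apply_self _ _ _
  have hA : ∑ i, rho n i * pvec (u * s) i
      = ∑ j : Fin n, ((n:ℝ) - ((u (s j) : Fin n):ℕ)) * (((j:ℕ):ℝ) + 1) := by
    rw [rho_pvec]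
    refine Finset.sum_congr rfl (fun j _ => ?_)
    simp [Equiv.Perm.mul_apply]
  have hA2 : ∑ j : Fin n, ((n:ℝ) - ((u (s j) : Fin n):ℕ)) * (((j:ℕ):ℝ) + 1)
      = ∑ j : Fin n, ((n:ℝ) - ((u j : Fin n):ℕ)) * (((s j : Fin n):ℕ) + 1 : ℝ) := by
    refine (Fintype.sum_equiv s _ _ (fun j => ?_)).symm
    rw [hss]
  rw [hA, hA2, rho_pvec, ← Finset.sum_sub_distrib]
  have hterm : ∀ j : Fin n, ((n:ℝ) - ((u j : Fin n):ℕ)) * (((s j : Fin n):ℕ) + 1 : ℝ)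
      - ((n:ℝ) - ((u j : Fin n):ℕ)) * (((j:ℕ):ℝ) + 1)
      = ((n:ℝ) - ((u j : Fin n):ℕ)) * ((((s j : Fin n):ℕ):ℝ) - ((j:ℕ):ℝ)) := by
    intro j; ring
  rw [Finset.sum_congr rfl (fun j _ => hterm j)]
  set k0 : Fin n := ⟨k, Nat.lt_of_succ_lt hk⟩ with hk0
  set k1 : Fin n := ⟨k+1, hk⟩ with hk1
  have hk01 : k0 ≠ k1 := by simp [hk0, hk1, Fin.ext_iff]
  have hsum : ∑ j : Fin n, ((n:ℝ) - ((u j : Fin n):ℕ)) * ((((s j : Fin n):ℕ):ℝ) - ((j:ℕ):ℝ))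
      = ∑ j ∈ ({k0, k1} : Finset (Fin n)),
          ((n:ℝ) - ((u j : Fin n):ℕ)) * ((((s j : Fin n):ℕ):ℝ) - ((j:ℕ):ℝ)) := by
    symm
    apply Finset.sum_subset (Finset.subset_univ _)
    intro p _ hp
    simp only [Finset.mem_insert, Finset.mem_singleton] at hp
    push_neg at hp
    have : s p = p := by
      rw [hs]
      refine aswap_fix k hk ?_ ?_
      · intro hc; exact hp.1 (Fin.ext hc)
      · intro hc; exact hp.2 (Fin.ext hc)
    rw [this]
    ring
  rw [hsum, Finset.sum_pair hk01]
  have e1 : s k0 = k1 := by rw [hs, hk0, hk1]; exact aswap_left k hk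
  have e2 : s k1 = k0 := by rw [hs, hk0, hk1]; exact aswap_right k hk
  rw [e1, e2]
  have v0 : ((k0 : Fin n):ℕ) = k := rfl
  have v1 : ((k1 : Fin n):ℕ) = k + 1 := rfl
  rw [v0, v1]
  push_cast
  ring

lemma stepR_oPerm {n : ℕ} {u v : SymGrp n} (h : stepR u v) :
    oPerm n (pvec u) (pvec v) := by
  obtain ⟨k, hk, rfl, hlen⟩ := h
  obtain ⟨hne, hexp⟩ := aswap_isEdge u k hk
  refine ⟨⟨hne, hexp⟩, ?_⟩
  have hdiff := rho_diff u k hk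
  have hlt : u ⟨k, Nat.lt_of_succ_lt hk⟩ < u ⟨k+1, hk⟩ := by
    rcases lt_or_ge (u ⟨k, Nat.lt_of_succ_lt hk⟩) (u ⟨k+1, hk⟩) with h1 | h1
    · exact h1
    · exfalso
      have hne2 : u ⟨k+1, hk⟩ ≠ u ⟨k, Nat.lt_of_succ_lt hk⟩ := by
        intro hc
        have := u.injective hc
        simp [Fin.ext_iff] at this
      have := invLen_mul_aswap_of_gt (lt_of_le_of_ne h1 hne2)
      omega
  have : (0:ℝ) < (((u ⟨k+1, hk⟩ : Fin n):ℕ):ℝ) - (((u ⟨k, Nat.lt_of_succ_lt hk⟩ : Fin n):ℕ):ℝ) := by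
    rw [sub_pos, Nat.cast_lt]
    exact hlt
  linarith [hdiff]

lemma oPerm_step {n : ℕ} {x y : Fin n → ℝ} (h : oPerm n x y) :
    ∃ u v : SymGrp n, x = pvec u ∧ y = pvec v ∧ stepR u v := by
  obtain ⟨⟨hne, hexp⟩, hrho⟩ := h
  obtain ⟨u, k, hk, rfl, rfl⟩ := edge_structure hne hexp
  refine ⟨u, u * aswap k hk, rfl, rfl, k, hk, rfl, ?_⟩
  have hdiff := rho_diff u k hk
  have hpos : (0:ℝ) < (((u ⟨k+1, hk⟩ : Fin n):ℕ):ℝ)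
      - (((u ⟨k, Nat.lt_of_succ_lt hk⟩ : Fin n):ℕ):ℝ) := by
    rw [← hdiff]; linarith
  have hlt : u ⟨k, Nat.lt_of_succ_lt hk⟩ < u ⟨k+1, hk⟩ := by
    rw [sub_pos, Nat.cast_lt] at hpos
    exact hpos
  exact invLen_mul_aswap_of_lt hlt

lemma rtg_oPerm_iff {n : ℕ} (u v : SymGrp n) :
    Relation.ReflTransGen (oPerm n) (pvec u) (pvec v) ↔ wleR u v := by
  constructor
  · intro h
    have haux : ∀ b, Relation.ReflTransGen (oPerm n) (pvec u) b →
        ∃ w : SymGrp n, b = pvec w ∧ wleR u w := by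
      intro b hb
      induction hb with
      | refl => exact ⟨u, rfl, wleR_refl u⟩
      | tail h1 h2 ih =>
        obtain ⟨w', rfl, hw'⟩ := ih
        obtain ⟨w1, w2, he1, rfl, hstep⟩ := oPerm_step h2
        have hw1 : w1 = w' := pvec_inj he1.symm
        rw [hw1] at hstep
        exact ⟨w2, rfl, wleR_trans hw' (stepR_wleR hstep)⟩
    obtain ⟨w, hbw, hle⟩ := haux _ h
    rwa [pvec_inj hbw]
  · intro h
    have hrtg := wleR_rtg h
    clear h
    induction hrtg with
    | refl => exact Relation.ReflTransGen.refl
    | tail _ hstep ih => exact Relation.ReflTransGen.tail ih (stepR_oPerm hstep)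

lemma oPerm_iff_cover {n : ℕ} (u v : SymGrp n) :
    oPerm n (pvec u) (pvec v) ↔
      (wleR u v ∧ u ≠ v ∧ ∀ z, wleR u z → wleR z v → z = u ∨ z = v) := by
  rw [← stepR_iff_cover]
  constructor
  · intro h
    obtain ⟨w1, w2, he1, he2, hstep⟩ := oPerm_step h
    rw [pvec_inj he1.symm, pvec_inj he2.symm] at hstep
    exact hstep
  · exact stepR_oPerm

end Skel


/-- The 1-skeleton poset of the permutahedron with respect to
`O_ρ` is the right weak order on `S_n`, and `O_ρ` is the Hasse diagram (the
cover relation) of this poset. -/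
theorem permutahedron_skeleton_is_weak_order {n : ℕ} :
    (∀ u v : SymGrp n,
      Relation.ReflTransGen (oPerm n) (pvec u) (pvec v) ↔ wleR u v) ∧
    (∀ u v : SymGrp n, oPerm n (pvec u) (pvec v) ↔
      (wleR u v ∧ u ≠ v ∧ ∀ z, wleR u z → wleR z v → z = u ∨ z = v)) :=
  ⟨fun u v => Skel.rtg_oPerm_iff u v, fun u v => Skel.oPerm_iff_cover u v⟩
end
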